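/- arXiv:2505.01858 — 8 statements merged into one kernel-verified Lean document; each statement's English description precedes it below -/
import Mathlib

section
/- Let T > 0, let G : Δ_T → ℝ be continuous with G(s,t) ≥ 0 for all (s,t) ∈ Δ_T, and let H : [0,T] → ℝ be continuous with H(t) > 0 for all t ∈ [0,T]. Then there exists exactly one continuous function f : [0,T] → ℝ satisfying the backward Volterra equation f(t) = ∫_t^T G(s,t) f(s) ds + H(t) for all t ∈ [0,T], and moreover this fixed point satisfies f(t) > 0 for all t ∈ [0,T]. -/
open MeasureTheory intervalIntegral Set

section
open Function Filter Topology

namespace VolterraAux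


variable {T : ℝ}

noncomputable def Phi (hT : 0 < T) (G : ℝ → ℝ → ℝ) (H : ℝ → ℝ)
    (hG : Continuous fun p : ℝ × ℝ => G p.1 p.2) (hH : Continuous H)
    (f : C(Set.Icc (0:ℝ) T, ℝ)) : C(Set.Icc (0:ℝ) T, ℝ) :=
  ⟨fun u => (∫ s in (u:ℝ)..T, G s u * f (Set.projIcc 0 T hT.le s)) + H u, by
    have h0 : Continuous fun p : ℝ × ℝ =>
        G p.2 p.1 * f (Set.projIcc 0 T hT.le p.2) := by
      exact (hG.comp (continuous_snd.prodMk continuous_fst)).mul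
        ((f.continuous.comp continuous_projIcc).comp continuous_snd)
    have h1 : Continuous fun t : ℝ =>
        ∫ s in T..t, G s t * f (Set.projIcc 0 T hT.le s) :=
      intervalIntegral.continuous_parametric_intervalIntegral_of_continuous
        (f := fun t s => G s t * f (Set.projIcc 0 T hT.le s)) (μ := volume) h0 continuous_id
    have h2 : Continuous fun t : ℝ =>
        (∫ s in t..T, G s t * f (Set.projIcc 0 T hT.le s)) + H t := by
      have h3 := h1.neg.add hH
      convert h3 using 2 with t
      rw [intervalIntegral.integral_symm]
      rfl
    exact h2.comp continuous_subtype_val⟩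

theorem Phi_apply (hT : 0 < T) (G : ℝ → ℝ → ℝ) (H : ℝ → ℝ)
    (hG : Continuous fun p : ℝ × ℝ => G p.1 p.2) (hH : Continuous H)
    (f : C(Set.Icc (0:ℝ) T, ℝ)) (u : Set.Icc (0:ℝ) T) :
    Phi hT G H hG hH f u
      = (∫ s in (u:ℝ)..T, G s u * f (Set.projIcc 0 T hT.le s)) + H u := rfl

theorem est (hT : 0 < T) (G : ℝ → ℝ → ℝ) (H : ℝ → ℝ)
    (hG : Continuous fun p : ℝ × ℝ => G p.1 p.2) (hH : Continuous H)
    {M : ℝ} (hM0 : 0 ≤ M)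
    (hM : ∀ s t : ℝ, 0 ≤ t → t ≤ T → t ≤ s → s ≤ T → |G s t| ≤ M)
    (n : ℕ) (f g : C(Set.Icc (0:ℝ) T, ℝ)) (u : Set.Icc (0:ℝ) T) :
    |(Phi hT G H hG hH)^[n] f u - (Phi hT G H hG hH)^[n] g u|
      ≤ M^n * (T - u)^n / n.factorial * dist f g := by
  induction n generalizing u with
  | zero =>
    simpa using (Real.dist_eq (f u) (g u) ▸ ContinuousMap.dist_apply_le_dist u)
  | succ n ih =>
    set Φ := Phi hT G H hG hH with hΦ
    set F₁ := Φ^[n] f with hF₁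
    set F₂ := Φ^[n] g with hF₂
    have hu0 : (0:ℝ) ≤ u := u.2.1
    have huT : (u:ℝ) ≤ T := u.2.2
    have hiter : ∀ h : C(Set.Icc (0:ℝ) T, ℝ), Φ^[n+1] h = Φ (Φ^[n] h) := fun h =>
      Function.iterate_succ_apply' Φ n h
    rw [hiter, hiter, Phi_apply, Phi_apply]
    have hc1 : Continuous fun s : ℝ => G s u * F₁ (Set.projIcc 0 T hT.le s) :=
      (hG.comp (continuous_id.prodMk continuous_const)).mul
        (F₁.continuous.comp continuous_projIcc)
    have hc2 : Continuous fun s : ℝ => G s u * F₂ (Set.projIcc 0 T hT.le s) :=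
      (hG.comp (continuous_id.prodMk continuous_const)).mul
        (F₂.continuous.comp continuous_projIcc)
    have hsub : ((∫ s in (u:ℝ)..T, G s u * F₁ (Set.projIcc 0 T hT.le s)) + H u)
        - ((∫ s in (u:ℝ)..T, G s u * F₂ (Set.projIcc 0 T hT.le s)) + H u)
        = ∫ s in (u:ℝ)..T,
            (G s u * F₁ (Set.projIcc 0 T hT.le s) - G s u * F₂ (Set.projIcc 0 T hT.le s)) := by
      rw [intervalIntegral.integral_sub (hc1.intervalIntegrable _ _) (hc2.intervalIntegrable _ _)]
      ring
    rw [hsub]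
    have key : (∫ s in (u:ℝ)..T,
          |G s u * F₁ (Set.projIcc 0 T hT.le s) - G s u * F₂ (Set.projIcc 0 T hT.le s)|)
        ≤ ∫ s in (u:ℝ)..T, M * (M^n * (T - s)^n / n.factorial * dist f g) := by
      apply intervalIntegral.integral_mono_on huT
      · exact ((hc1.sub hc2).abs.intervalIntegrable _ _)
      · exact (Continuous.intervalIntegrable (by fun_prop) _ _)
      · intro s hs
        have hsmem : s ∈ Set.Icc (0:ℝ) T := ⟨le_trans hu0 hs.1, hs.2⟩
        have hproj : Set.projIcc 0 T hT.le s = ⟨s, hsmem⟩ := Set.projIcc_of_mem hT.le hsmem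
        rw [← mul_sub, abs_mul, hproj]
        have hGb : |G s u| ≤ M := hM s u hu0 huT hs.1 hs.2
        have hIH := ih ⟨s, hsmem⟩
        exact mul_le_mul hGb (by simpa using hIH) (abs_nonneg _) hM0
    have habs : |∫ s in (u:ℝ)..T,
          (G s u * F₁ (Set.projIcc 0 T hT.le s) - G s u * F₂ (Set.projIcc 0 T hT.le s))|
        ≤ ∫ s in (u:ℝ)..T,
          |G s u * F₁ (Set.projIcc 0 T hT.le s) - G s u * F₂ (Set.projIcc 0 T hT.le s)| :=
      intervalIntegral.abs_integral_le_integral_abs huT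
    have hcomp : (∫ s in (u:ℝ)..T, M * (M^n * (T - s)^n / n.factorial * dist f g))
        = M^(n+1) * (T - u)^(n+1) / (n+1).factorial * dist f g := by
      have hrw : ∀ s : ℝ, M * (M^n * (T - s)^n / n.factorial * dist f g)
          = (M^(n+1) * dist f g / n.factorial) * (T - s)^n := fun s => by ring
      simp only [hrw]
      rw [intervalIntegral.integral_const_mul]
      have h2 : (∫ s in (u:ℝ)..T, (T - s)^n) = (T - u)^(n+1)/(n+1) := by
        rw [intervalIntegral.integral_comp_sub_left (fun x => x^n) T]
        simp [integral_pow]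
      rw [h2, Nat.factorial_succ]
      have hfac : (n.factorial : ℝ) ≠ 0 := Nat.cast_ne_zero.2 n.factorial_ne_zero
      have hn1 : ((n:ℝ) + 1) ≠ 0 := by positivity
      push_cast
      field_simp
    exact le_trans habs (le_trans key (le_of_eq hcomp))



theorem main (hT : 0 < T) (G : ℝ → ℝ → ℝ) (H : ℝ → ℝ)
    (hG : Continuous fun p : ℝ × ℝ => G p.1 p.2) (hH : Continuous H)
    (hGnonneg : ∀ s t : ℝ, 0 ≤ t → t ≤ s → s ≤ T → 0 ≤ G s t)
    (hHpos : ∀ t ∈ Set.Icc (0:ℝ) T, 0 < H t) :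
    (∃ f : ℝ → ℝ, ContinuousOn f (Set.Icc 0 T) ∧
      (∀ t ∈ Set.Icc (0:ℝ) T, f t = (∫ s in t..T, G s t * f s) + H t) ∧
      (∀ t ∈ Set.Icc (0:ℝ) T, 0 < f t)) ∧
    (∀ f₁ f₂ : ℝ → ℝ, ContinuousOn f₁ (Set.Icc 0 T) → ContinuousOn f₂ (Set.Icc 0 T) →
      (∀ t ∈ Set.Icc (0:ℝ) T, f₁ t = (∫ s in t..T, G s t * f₁ s) + H t) →
      (∀ t ∈ Set.Icc (0:ℝ) T, f₂ t = (∫ s in t..T, G s t * f₂ s) + H t) →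
      ∀ t ∈ Set.Icc (0:ℝ) T, f₁ t = f₂ t) := by
  haveI : Nonempty (Set.Icc (0:ℝ) T) := ⟨⟨0, le_refl 0, hT.le⟩⟩
  set Φ := Phi hT G H hG hH with hΦdef
  -- bound on G
  obtain ⟨M₀, hM₀⟩ := (isCompact_Icc.prod isCompact_Icc).exists_bound_of_continuousOn
    (s := Set.Icc (0:ℝ) T ×ˢ Set.Icc (0:ℝ) T) hG.continuousOn
  set M : ℝ := max M₀ 0 with hMdef
  have hM0 : 0 ≤ M := le_max_right _ _
  have hM : ∀ s t : ℝ, 0 ≤ t → t ≤ T → t ≤ s → s ≤ T → |G s t| ≤ M := by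
    intro s t h1 h2 h3 h4
    exact le_trans (hM₀ (s, t) ⟨⟨le_trans h1 h3, h4⟩, ⟨h1, h2⟩⟩) (le_max_left _ _)
  -- choose n with contraction constant < 1
  have htend := FloorSemiring.tendsto_pow_div_factorial_atTop (K := ℝ) (M * T)
  obtain ⟨n, hn⟩ := (htend.eventually (gt_mem_nhds one_pos)).exists
  have hKnonneg : (0:ℝ) ≤ (M * T)^n / n.factorial := by positivity
  set K : NNReal := ⟨(M * T)^n / n.factorial, hKnonneg⟩ with hKdef
  have hK1 : K < 1 := by
    rw [← NNReal.coe_lt_coe]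
    exact hn
  -- Lipschitz bound for the iterate
  have hdist : ∀ f g : C(Set.Icc (0:ℝ) T, ℝ),
      dist (Φ^[n] f) (Φ^[n] g) ≤ K * dist f g := by
    intro f g
    rw [ContinuousMap.dist_le (by positivity)]
    intro u
    rw [Real.dist_eq]
    have h1 := est hT G H hG hH hM0 hM n f g u
    refine le_trans h1 ?_
    have h2 : M^n * (T - (u:ℝ))^n ≤ M^n * T^n := by
      apply mul_le_mul_of_nonneg_left _ (by positivity)
      apply pow_le_pow_left₀ (by linarith [u.2.2]) (by linarith [u.2.1])
    have h3 : (K : ℝ) = (M * T)^n / n.factorial := rfl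
    rw [h3, mul_pow]
    refine mul_le_mul_of_nonneg_right ?_ dist_nonneg
    have hfacpos : (0:ℝ) < n.factorial := Nat.cast_pos.2 n.factorial_pos
    exact (div_le_div_iff_of_pos_right hfacpos).2 h2
  have hcontract : ContractingWith K (Φ^[n]) :=
    ⟨hK1, LipschitzWith.of_dist_le_mul hdist⟩
  set fp := hcontract.fixedPoint (Φ^[n]) with hfpdef
  have hfpfix : Function.IsFixedPt Φ fp :=
    ContractingWith.isFixedPt_fixedPoint_iterate hcontract
  -- nonnegativity of the fixed point
  have hpreserve : ∀ f : C(Set.Icc (0:ℝ) T, ℝ), (∀ u, 0 ≤ f u) → ∀ u, 0 ≤ Φ f u := by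
    intro f hf u
    rw [hΦdef, Phi_apply]
    have hint : 0 ≤ ∫ s in (u:ℝ)..T, G s u * f (Set.projIcc 0 T hT.le s) := by
      apply intervalIntegral.integral_nonneg u.2.2
      intro s hs
      exact mul_nonneg (hGnonneg s u u.2.1 hs.1 hs.2) (hf _)
    have hHu := hHpos u u.2
    linarith
  have hiternn : ∀ m : ℕ, ∀ u, 0 ≤ (Φ^[m] (0 : C(Set.Icc (0:ℝ) T, ℝ))) u := by
    intro m
    induction m with
    | zero => intro u; simp
    | succ m ihm =>
      intro u
      rw [Function.iterate_succ_apply']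
      exact hpreserve _ ihm u
  have hCclosed : IsClosed {f : C(Set.Icc (0:ℝ) T, ℝ) | ∀ u, 0 ≤ f u} := by
    have : {f : C(Set.Icc (0:ℝ) T, ℝ) | ∀ u, 0 ≤ f u}
        = ⋂ u, {f : C(Set.Icc (0:ℝ) T, ℝ) | 0 ≤ f u} := by
      ext f; simp
    rw [this]
    exact isClosed_iInter fun u =>
      isClosed_le continuous_const (continuous_eval_const u)
  have hfpnn : ∀ u, 0 ≤ fp u := by
    have htends := hcontract.tendsto_iterate_fixedPoint (0 : C(Set.Icc (0:ℝ) T, ℝ))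
    have hmem : fp ∈ {f : C(Set.Icc (0:ℝ) T, ℝ) | ∀ u, 0 ≤ f u} := by
      apply hCclosed.mem_of_tendsto htends
      filter_upwards with k
      intro u
      have : (Φ^[n])^[k] (0 : C(Set.Icc (0:ℝ) T, ℝ)) = Φ^[n * k] 0 := by
        rw [Function.iterate_mul]
      rw [this]
      exact hiternn (n * k) u
    exact hmem
  have hfppos : ∀ u : Set.Icc (0:ℝ) T, 0 < fp u := by
    intro u
    have h1 : fp u = (∫ s in (u:ℝ)..T, G s u * fp (Set.projIcc 0 T hT.le s)) + H u := by
      conv_lhs => rw [← hfpfix]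
      rfl
    have hint : 0 ≤ ∫ s in (u:ℝ)..T, G s u * fp (Set.projIcc 0 T hT.le s) := by
      apply intervalIntegral.integral_nonneg u.2.2
      intro s hs
      exact mul_nonneg (hGnonneg s u u.2.1 hs.1 hs.2) (hfpnn _)
    have hHu := hHpos u u.2
    rw [h1]; linarith
  constructor
  · -- existence
    refine ⟨fun t => fp (Set.projIcc 0 T hT.le t), ?_, ?_, ?_⟩
    · exact (fp.continuous.comp continuous_projIcc).continuousOn
    · intro t ht
      have hproj : Set.projIcc 0 T hT.le t = ⟨t, ht⟩ := Set.projIcc_of_mem hT.le ht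
      show fp (Set.projIcc 0 T hT.le t)
        = (∫ s in t..T, G s t * fp (Set.projIcc 0 T hT.le s)) + H t
      rw [hproj]
      conv_lhs => rw [← hfpfix]
      rfl
    · intro t ht
      exact hfppos _
  · -- uniqueness
    intro f₁ f₂ hf₁ hf₂ heq₁ heq₂ t ht
    have mk_fixed : ∀ (f : ℝ → ℝ), ContinuousOn f (Set.Icc 0 T) →
        (∀ t ∈ Set.Icc (0:ℝ) T, f t = (∫ s in t..T, G s t * f s) + H t) →
        ∀ x : C(Set.Icc (0:ℝ) T, ℝ), (∀ u : Set.Icc (0:ℝ) T, x u = f u) →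
        Function.IsFixedPt Φ x := by
      intro f hf heq x hx
      apply ContinuousMap.ext
      intro u
      have hcongr : (∫ s in (u:ℝ)..T, G s u * x (Set.projIcc 0 T hT.le s))
          = ∫ s in (u:ℝ)..T, G s u * f s := by
        apply intervalIntegral.integral_congr
        intro s hs
        rw [Set.uIcc_of_le u.2.2] at hs
        have hsmem : s ∈ Set.Icc (0:ℝ) T := ⟨le_trans u.2.1 hs.1, hs.2⟩
        show G s ↑u * x (Set.projIcc 0 T hT.le s) = G s ↑u * f s
        rw [Set.projIcc_of_mem hT.le hsmem, hx ⟨s, hsmem⟩]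
      show (∫ s in (u:ℝ)..T, G s u * x (Set.projIcc 0 T hT.le s)) + H u = x u
      rw [hcongr, hx u, ← heq u u.2]
    set x₁ : C(Set.Icc (0:ℝ) T, ℝ) := ⟨(Set.Icc (0:ℝ) T).restrict f₁, hf₁.restrict⟩ with hx₁
    set x₂ : C(Set.Icc (0:ℝ) T, ℝ) := ⟨(Set.Icc (0:ℝ) T).restrict f₂, hf₂.restrict⟩ with hx₂
    have hfix₁ : Function.IsFixedPt Φ x₁ := mk_fixed f₁ hf₁ heq₁ x₁ (fun u => rfl)
    have hfix₂ : Function.IsFixedPt Φ x₂ := mk_fixed f₂ hf₂ heq₂ x₂ (fun u => rfl)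
    have : x₁ = x₂ := hcontract.fixedPoint_unique' (hfix₁.iterate n) (hfix₂.iterate n)
    have := ContinuousMap.congr_fun this ⟨t, ht⟩
    exact this

end VolterraAux

end

/-- Existence and uniqueness of a continuous, strictly positive solution
to the backward Volterra equation `f t = ∫_t^T G s t * f s ds + H t`. -/
theorem stmt_0 (T : ℝ) (hT : 0 < T) (G : ℝ → ℝ → ℝ) (H : ℝ → ℝ)
    (hGcont : ContinuousOn (fun p : ℝ × ℝ => G p.1 p.2)
      {p : ℝ × ℝ | 0 ≤ p.2 ∧ p.2 ≤ p.1 ∧ p.1 ≤ T})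
    (hGnonneg : ∀ s t : ℝ, 0 ≤ t → t ≤ s → s ≤ T → 0 ≤ G s t)
    (hHcont : ContinuousOn H (Set.Icc 0 T))
    (hHpos : ∀ t ∈ Set.Icc (0:ℝ) T, 0 < H t) :
    (∃ f : ℝ → ℝ, ContinuousOn f (Set.Icc 0 T) ∧
      (∀ t ∈ Set.Icc (0:ℝ) T, f t = (∫ s in t..T, G s t * f s) + H t) ∧
      (∀ t ∈ Set.Icc (0:ℝ) T, 0 < f t)) ∧
    (∀ f₁ f₂ : ℝ → ℝ, ContinuousOn f₁ (Set.Icc 0 T) → ContinuousOn f₂ (Set.Icc 0 T) →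
      (∀ t ∈ Set.Icc (0:ℝ) T, f₁ t = (∫ s in t..T, G s t * f₁ s) + H t) →
      (∀ t ∈ Set.Icc (0:ℝ) T, f₂ t = (∫ s in t..T, G s t * f₂ s) + H t) →
      ∀ t ∈ Set.Icc (0:ℝ) T, f₁ t = f₂ t) := by
  classical
  -- clamp into `[0, T]`
  set tc : ℝ → ℝ := fun t => max 0 (min t T) with htc
  have htc_cont : Continuous tc := continuous_const.max (continuous_id.min continuous_const)
  have htc_mem : ∀ t, tc t ∈ Set.Icc (0:ℝ) T :=
    fun t => ⟨le_max_left _ _, max_le (hT.le) (min_le_right _ _)⟩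
  have htc_eq : ∀ t ∈ Set.Icc (0:ℝ) T, tc t = t := by
    intro t ht
    simp only [htc]
    rw [min_eq_left ht.2, max_eq_right ht.1]
  -- extended kernel and inhomogeneity
  set G' : ℝ → ℝ → ℝ := fun s t => G (min (max s (tc t)) T) (tc t) with hG'
  set H' : ℝ → ℝ := fun t => H (tc t) with hH'
  have hGeq : ∀ t ∈ Set.Icc (0:ℝ) T, ∀ s, t ≤ s → s ≤ T → G' s t = G s t := by
    intro t ht s hts hsT
    simp only [hG']
    rw [htc_eq t ht, max_eq_left hts, min_eq_left hsT]
  have hHeq : ∀ t ∈ Set.Icc (0:ℝ) T, H' t = H t := by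
    intro t ht
    simp only [hH']
    rw [htc_eq t ht]
  have hG'cont : Continuous fun p : ℝ × ℝ => G' p.1 p.2 := by
    have hmap : Continuous fun p : ℝ × ℝ =>
        ((min (max p.1 (tc p.2)) T, tc p.2) : ℝ × ℝ) :=
      ((continuous_fst.max (htc_cont.comp continuous_snd)).min continuous_const).prodMk
        (htc_cont.comp continuous_snd)
    have hmem : ∀ p : ℝ × ℝ,
        ((min (max p.1 (tc p.2)) T, tc p.2) : ℝ × ℝ)
          ∈ {p : ℝ × ℝ | 0 ≤ p.2 ∧ p.2 ≤ p.1 ∧ p.1 ≤ T} := by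
      intro p
      refine ⟨(htc_mem p.2).1, le_min (le_max_right _ _) (htc_mem p.2).2, min_le_right _ _⟩
    exact hGcont.comp_continuous hmap hmem
  have hH'cont : Continuous H' := hHcont.comp_continuous htc_cont htc_mem
  have hG'nonneg : ∀ s t : ℝ, 0 ≤ t → t ≤ s → s ≤ T → 0 ≤ G' s t := by
    intro s t h1 h2 h3
    rw [hGeq t ⟨h1, le_trans h2 h3⟩ s h2 h3]
    exact hGnonneg s t h1 h2 h3
  have hH'pos : ∀ t ∈ Set.Icc (0:ℝ) T, 0 < H' t := by
    intro t ht
    rw [hHeq t ht]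
    exact hHpos t ht
  obtain ⟨⟨f, hfcont, hfeq, hfpos⟩, huniq⟩ :=
    VolterraAux.main hT G' H' hG'cont hH'cont hG'nonneg hH'pos
  -- converting between the two equations
  have hconv : ∀ (g : ℝ → ℝ), ∀ t ∈ Set.Icc (0:ℝ) T,
      (∫ s in t..T, G' s t * g s) = ∫ s in t..T, G s t * g s := by
    intro g t ht
    apply intervalIntegral.integral_congr
    intro s hs
    rw [Set.uIcc_of_le ht.2] at hs
    show G' s t * g s = G s t * g s
    rw [hGeq t ht s hs.1 hs.2]
  constructor
  · refine ⟨f, hfcont, ?_, hfpos⟩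
    intro t ht
    rw [hfeq t ht, hconv f t ht, hHeq t ht]
  · intro f₁ f₂ hf₁ hf₂ heq₁ heq₂ t ht
    apply huniq f₁ f₂ hf₁ hf₂ _ _ t ht
    · intro u hu
      rw [heq₁ u hu, hconv f₁ u hu, hHeq u hu]
    · intro u hu
      rw [heq₂ u hu, hconv f₂ u hu, hHeq u hu]
end

section
/- Let T > 0, let G : [0,∞) × Δ_T → ℝ be continuous with G(r,s,t) ≥ 0 for all r ≥ 0 and (s,t) ∈ Δ_T, and let H : [0,∞) × [0,T] → ℝ be continuous with H(r,t) > 0 for all (r,t). For each r ≥ 0, let f(·;r) : [0,T] → ℝ be the unique continuous solution of f(t;r) = ∫_t^T G(r,s,t) f(s;r) ds + H(r,t) for all t ∈ [0,T] (which exists and is positive). Then the function (t,r) ↦ f(t;r) is continuous on [0,T] × [0,∞). -/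
open MeasureTheory intervalIntegral Set

lemma volterra_gronwall {T M B e : ℝ} (hM : 0 < M) (hB : 0 ≤ B) (he : 0 ≤ e)
    {g : ℝ → ℝ} (hg : ContinuousOn g (Icc 0 T))
    (hgB : ∀ t ∈ Icc 0 T, |g t| ≤ B)
    (hineq : ∀ t ∈ Icc 0 T, |g t| ≤ M * (∫ s in t..T, |g s|) + e) :
    ∀ t ∈ Icc 0 T, |g t| ≤ e * Real.exp (M * T) := by
  have key : ∀ n : ℕ, ∀ t ∈ Icc 0 T,
      |g t| ≤ B * ((M * (T - t)) ^ n / n.factorial) + e * Real.exp (M * (T - t)) := by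
    intro n
    induction n with
    | zero =>
      intro t ht
      have h1 := hgB t ht
      have h2 : (0:ℝ) ≤ e * Real.exp (M * (T - t)) :=
        mul_nonneg he (Real.exp_pos _).le
      simpa using by linarith
    | succ n ih =>
      intro t ht
      have htT : t ≤ T := ht.2
      have ht0 : 0 ≤ t := ht.1
      have hsub : Icc t T ⊆ Icc 0 T := Icc_subset_Icc ht0 le_rfl
      -- integrability
      have hgi : IntervalIntegrable (fun s => |g s|) volume t T := by
        apply ContinuousOn.intervalIntegrable
        rw [uIcc_of_le htT]
        exact (hg.mono hsub).abs
      have hRHSc : ContinuousOn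
          (fun s => B * ((M * (T - s)) ^ n / n.factorial) + e * Real.exp (M * (T - s)))
          (Icc t T) := by fun_prop
      have hRHSi : IntervalIntegrable
          (fun s => B * ((M * (T - s)) ^ n / n.factorial) + e * Real.exp (M * (T - s)))
          volume t T := by
        apply ContinuousOn.intervalIntegrable
        rw [uIcc_of_le htT]; exact hRHSc
      have hmono : (∫ s in t..T, |g s|) ≤
          ∫ s in t..T, (B * ((M * (T - s)) ^ n / n.factorial) + e * Real.exp (M * (T - s))) := by
        apply intervalIntegral.integral_mono_on htT hgi hRHSi
        intro s hs
        exact ih s (hsub hs)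
      -- compute the RHS integral
      have I1 : (∫ s in t..T, (T - s) ^ n) = (T - t) ^ (n + 1) / (n + 1) := by
        rw [intervalIntegral.integral_comp_sub_left (fun u => u ^ n) T]
        simp [integral_pow]
      have I2 : (∫ s in t..T, Real.exp (M * (T - s)))
          = (Real.exp (M * (T - t)) - 1) / M := by
        rw [intervalIntegral.integral_comp_sub_left (fun u => Real.exp (M * u)) T]
        rw [intervalIntegral.integral_comp_mul_left (fun u => Real.exp u) hM.ne']
        simp [integral_exp, smul_eq_mul, div_eq_inv_mul]
      have Isplit : (∫ s in t..T, (B * ((M * (T - s)) ^ n / n.factorial)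
            + e * Real.exp (M * (T - s))))
          = (B * M ^ n / n.factorial) * ((T - t) ^ (n + 1) / (n + 1))
            + e * ((Real.exp (M * (T - t)) - 1) / M) := by
        have i1 : IntervalIntegrable (fun s => B * ((M * (T - s)) ^ n / n.factorial))
            volume t T := by
          apply ContinuousOn.intervalIntegrable; rw [uIcc_of_le htT]; fun_prop
        have i2 : IntervalIntegrable (fun s => e * Real.exp (M * (T - s))) volume t T := by
          apply ContinuousOn.intervalIntegrable; rw [uIcc_of_le htT]; fun_prop
        rw [intervalIntegral.integral_add i1 i2]
        have e1 : (∫ s in t..T, B * ((M * (T - s)) ^ n / n.factorial))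
            = (B * M ^ n / n.factorial) * ∫ s in t..T, (T - s) ^ n := by
          rw [← intervalIntegral.integral_const_mul]
          congr 1; ext s; rw [mul_pow]; ring
        have e2 : (∫ s in t..T, e * Real.exp (M * (T - s)))
            = e * ∫ s in t..T, Real.exp (M * (T - s)) := by
          rw [← intervalIntegral.integral_const_mul]
        rw [e1, e2, I1, I2]
      have hstep := hineq t ht
      have hMnn : (0:ℝ) ≤ M := hM.le
      have hTt : (0:ℝ) ≤ T - t := by linarith
      calc |g t| ≤ M * (∫ s in t..T, |g s|) + e := hstep
        _ ≤ M * ((B * M ^ n / n.factorial) * ((T - t) ^ (n + 1) / (n + 1))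
              + e * ((Real.exp (M * (T - t)) - 1) / M)) + e := by
            have := hmono
            rw [Isplit] at this
            nlinarith [this]
        _ = B * ((M * (T - t)) ^ (n + 1) / (n + 1).factorial)
              + e * Real.exp (M * (T - t)) := by
            rw [mul_pow, Nat.factorial_succ]
            push_cast
            field_simp
            ring
  intro t ht
  have hlim : Filter.Tendsto
      (fun n : ℕ => B * ((M * (T - t)) ^ n / n.factorial) + e * Real.exp (M * (T - t)))
      Filter.atTop (nhds (B * 0 + e * Real.exp (M * (T - t)))) :=
    ((FloorSemiring.tendsto_pow_div_factorial_atTop (M * (T - t))).const_mul B).add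
      tendsto_const_nhds
  have hle : |g t| ≤ B * 0 + e * Real.exp (M * (T - t)) :=
    ge_of_tendsto' hlim (fun n => key n t ht)
  have hexp : Real.exp (M * (T - t)) ≤ Real.exp (M * T) := by
    apply Real.exp_le_exp.mpr
    nlinarith [ht.1, hM.le]
  nlinarith [hle, hexp, he]

/-- Joint continuity in `(t, r)` of the unique positive fixed point of the
parametrized backward Volterra equation `f t r = ∫_t^T G r s t * f s r ds + H r t`. -/
theorem stmt_1 (T : ℝ) (hT : 0 < T)
    (G : ℝ → ℝ → ℝ → ℝ) (H : ℝ → ℝ → ℝ) (f : ℝ → ℝ → ℝ)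
    (hGcont : ContinuousOn (fun p : ℝ × ℝ × ℝ => G p.1 p.2.1 p.2.2)
      {p : ℝ × ℝ × ℝ | 0 ≤ p.1 ∧ 0 ≤ p.2.2 ∧ p.2.2 ≤ p.2.1 ∧ p.2.1 ≤ T})
    (hGnonneg : ∀ r s t : ℝ, 0 ≤ r → 0 ≤ t → t ≤ s → s ≤ T → 0 ≤ G r s t)
    (hHcont : ContinuousOn (fun p : ℝ × ℝ => H p.1 p.2) (Set.Ici 0 ×ˢ Set.Icc 0 T))
    (hHpos : ∀ r ∈ Set.Ici (0:ℝ), ∀ t ∈ Set.Icc (0:ℝ) T, 0 < H r t)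
    (hfcont : ∀ r ∈ Set.Ici (0:ℝ), ContinuousOn (fun t => f t r) (Set.Icc 0 T))
    (hffix : ∀ r ∈ Set.Ici (0:ℝ), ∀ t ∈ Set.Icc (0:ℝ) T,
      f t r = (∫ s in t..T, G r s t * f s r) + H r t)
    (hfpos : ∀ r ∈ Set.Ici (0:ℝ), ∀ t ∈ Set.Icc (0:ℝ) T, 0 < f t r)
    (hfuniq : ∀ r ∈ Set.Ici (0:ℝ), ∀ g : ℝ → ℝ, ContinuousOn g (Set.Icc 0 T) →
      (∀ t ∈ Set.Icc (0:ℝ) T, g t = (∫ s in t..T, G r s t * g s) + H r t) →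
      ∀ t ∈ Set.Icc (0:ℝ) T, g t = f t r) :
    ContinuousOn (fun p : ℝ × ℝ => f p.1 p.2) (Set.Icc 0 T ×ˢ Set.Ici 0) := by
  rintro ⟨t₀, r₀⟩ hp₀
  obtain ⟨ht₀, hr₀⟩ := hp₀
  simp only [mem_Icc, mem_Ici] at ht₀ hr₀
  set R := r₀ + 1 with hR
  have hr₀R : r₀ ∈ Icc 0 R := ⟨hr₀, by linarith⟩
  -- the compact triangle
  set D : Set (ℝ × ℝ) := {q : ℝ × ℝ | 0 ≤ q.2 ∧ q.2 ≤ q.1 ∧ q.1 ≤ T} with hD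
  have hDsub : D ⊆ Icc (0:ℝ) T ×ˢ Icc (0:ℝ) T := by
    rintro ⟨s, t⟩ ⟨h1, h2, h3⟩
    exact ⟨⟨le_trans h1 h2, h3⟩, ⟨h1, le_trans h2 h3⟩⟩
  have hDclosed : IsClosed D := by
    have : D = {q : ℝ × ℝ | 0 ≤ q.2} ∩ ({q : ℝ × ℝ | q.2 ≤ q.1} ∩ {q : ℝ × ℝ | q.1 ≤ T}) := by
      ext q; simp [hD, and_assoc]
    rw [this]
    exact (isClosed_le continuous_const continuous_snd).inter
      ((isClosed_le continuous_snd continuous_fst).inter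
        (isClosed_le continuous_fst continuous_const))
  have hDcomp : IsCompact D :=
    IsCompact.of_isClosed_subset (isCompact_Icc.prod isCompact_Icc) hDclosed hDsub
  set K₁ : Set (ℝ × ℝ × ℝ) := Icc 0 R ×ˢ D with hK₁
  have hK₁comp : IsCompact K₁ := isCompact_Icc.prod hDcomp
  have hK₁sub : K₁ ⊆ {p : ℝ × ℝ × ℝ | 0 ≤ p.1 ∧ 0 ≤ p.2.2 ∧ p.2.2 ≤ p.2.1 ∧ p.2.1 ≤ T} := by
    rintro ⟨r, s, t⟩ ⟨hr, h1, h2, h3⟩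
    exact ⟨hr.1, h1, h2, h3⟩
  have hGK₁ : ContinuousOn (fun p : ℝ × ℝ × ℝ => G p.1 p.2.1 p.2.2) K₁ := hGcont.mono hK₁sub
  -- bound on G
  obtain ⟨M₀, hM₀⟩ := hK₁comp.exists_bound_of_continuousOn hGK₁
  set M : ℝ := max M₀ 1 with hM
  have hMpos : (0:ℝ) < M := lt_of_lt_of_le one_pos (le_max_right _ _)
  have hGM : ∀ r' ∈ Icc (0:ℝ) R, ∀ s t' : ℝ, 0 ≤ t' → t' ≤ s → s ≤ T → |G r' s t'| ≤ M := by
    intro r' hr' s t' h1 h2 h3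
    have := hM₀ (r', s, t') ⟨hr', h1, h2, h3⟩
    simp only [Real.norm_eq_abs] at this
    exact le_trans this (le_max_left _ _)
  -- bound on f(·, r₀)
  obtain ⟨C₀, hC₀⟩ := isCompact_Icc.exists_bound_of_continuousOn (hfcont r₀ hr₀)
  set C : ℝ := max C₀ 0 with hC
  have hCnn : (0:ℝ) ≤ C := le_max_right _ _
  have hfC : ∀ s ∈ Icc (0:ℝ) T, |f s r₀| ≤ C := by
    intro s hs
    have := hC₀ s hs
    simp only [Real.norm_eq_abs] at this
    exact le_trans this (le_max_left _ _)
  -- uniform continuity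
  have hGU := Metric.uniformContinuousOn_iff.mp (hK₁comp.uniformContinuousOn_of_continuous hGK₁)
  set K₂ : Set (ℝ × ℝ) := Icc 0 R ×ˢ Icc 0 T with hK₂
  have hK₂comp : IsCompact K₂ := isCompact_Icc.prod isCompact_Icc
  have hHK₂ : ContinuousOn (fun p : ℝ × ℝ => H p.1 p.2) K₂ :=
    hHcont.mono (by rintro ⟨r, t⟩ ⟨h1, h2⟩; exact ⟨h1.1, h2⟩)
  have hHU := Metric.uniformContinuousOn_iff.mp (hK₂comp.uniformContinuousOn_of_continuous hHK₂)
  -- epsilon chase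
  rw [Metric.continuousWithinAt_iff]
  intro ε hε
  set e' : ℝ := ε / 2 / Real.exp (M * T) with he'def
  have he' : 0 < e' := div_pos (half_pos hε) (Real.exp_pos _)
  set εG : ℝ := e' / (2 * (T * C + 1)) with hεGdef
  have hTC : (0:ℝ) < T * C + 1 := by nlinarith
  have hεG : 0 < εG := div_pos he' (by linarith)
  set εH : ℝ := e' / 2 with hεHdef
  have hεH : 0 < εH := half_pos he'
  obtain ⟨δG, hδG, hδGp⟩ := hGU εG hεG
  obtain ⟨δH, hδH, hδHp⟩ := hHU εH hεH
  obtain ⟨δt, hδt, hδtp⟩ := Metric.continuousWithinAt_iff.mp (hfcont r₀ hr₀ t₀ ⟨ht₀.1, ht₀.2⟩)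
    (ε / 2) (half_pos hε)
  refine ⟨min (min δG δH) (min δt 1), by positivity, ?_⟩
  rintro ⟨t, r⟩ hp hdist
  obtain ⟨ht, hr⟩ := hp
  simp only [mem_Icc, mem_Ici] at ht hr
  have hdt : dist t t₀ < min (min δG δH) (min δt 1) :=
    lt_of_le_of_lt (by rw [Prod.dist_eq]; exact le_max_left _ _) hdist
  have hdr : dist r r₀ < min (min δG δH) (min δt 1) :=
    lt_of_le_of_lt (by rw [Prod.dist_eq]; exact le_max_right _ _) hdist
  have hrR : r ∈ Icc (0:ℝ) R := by
    constructor
    · exact hr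
    · have : dist r r₀ < 1 := lt_of_lt_of_le hdr (le_trans (min_le_right _ _) (min_le_right _ _))
      rw [Real.dist_eq] at this
      have := abs_lt.mp this
      simp only [hR]; linarith [this.1, this.2]
  have hdrG : dist r r₀ < δG := lt_of_lt_of_le hdr (le_trans (min_le_left _ _) (min_le_left _ _))
  have hdrH : dist r r₀ < δH := lt_of_lt_of_le hdr (le_trans (min_le_left _ _) (min_le_right _ _))
  have hdtt : dist t t₀ < δt := lt_of_lt_of_le hdt (le_trans (min_le_right _ _) (min_le_left _ _))
  -- G difference bound
  have hGdiff : ∀ s t' : ℝ, 0 ≤ t' → t' ≤ s → s ≤ T → |G r s t' - G r₀ s t'| ≤ εG := by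
    intro s t' h1 h2 h3
    have key := hδGp (r, s, t') ⟨hrR, h1, h2, h3⟩ (r₀, s, t') ⟨hr₀R, h1, h2, h3⟩ ?_
    · rw [Real.dist_eq] at key; exact key.le
    · rw [Prod.dist_eq]
      simp only [dist_self, Prod.dist_eq, max_self]
      exact lt_of_le_of_lt (max_le le_rfl (by positivity)) hdrG
  -- H difference bound
  have hHdiff : ∀ t' ∈ Icc (0:ℝ) T, |H r t' - H r₀ t'| ≤ εH := by
    intro t' ht'
    have key := hδHp (r, t') ⟨hrR, ht'⟩ (r₀, t') ⟨hr₀R, ht'⟩ ?_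
    · rw [Real.dist_eq] at key; exact key.le
    · rw [Prod.dist_eq]
      simp only [dist_self]
      exact lt_of_le_of_lt (max_le le_rfl dist_nonneg) hdrH
  -- the difference function
  set g : ℝ → ℝ := fun s => f s r - f s r₀ with hg
  have hgc : ContinuousOn g (Icc 0 T) := (hfcont r hr).sub (hfcont r₀ hr₀)
  obtain ⟨B₀, hB₀⟩ := isCompact_Icc.exists_bound_of_continuousOn hgc
  set B : ℝ := max B₀ 0 with hB
  have hgB : ∀ s ∈ Icc (0:ℝ) T, |g s| ≤ B := by
    intro s hs
    have := hB₀ s hs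
    simp only [Real.norm_eq_abs] at this
    exact le_trans this (le_max_left _ _)
  -- continuity of s ↦ G r' s t' on [t', T]
  have hGs : ∀ r' ∈ Icc (0:ℝ) R, ∀ t' ∈ Icc (0:ℝ) T,
      ContinuousOn (fun s => G r' s t') (Icc t' T) := by
    intro r' hr' t' ht'
    have hmap : ContinuousOn (fun s : ℝ => ((r', (s, t')) : ℝ × ℝ × ℝ)) (Icc t' T) :=
      Continuous.continuousOn (by fun_prop)
    exact hGcont.comp hmap (fun s hs => ⟨hr'.1, ht'.1, hs.1, hs.2⟩)
  -- main integral inequality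
  have hineq : ∀ t' ∈ Icc (0:ℝ) T,
      |g t'| ≤ M * (∫ s in t'..T, |g s|) + (T * C * εG + εH) := by
    intro t' ht'
    have ht'T : t' ≤ T := ht'.2
    have hsub : Icc t' T ⊆ Icc 0 T := Icc_subset_Icc ht'.1 le_rfl
    have hfc1 : ContinuousOn (fun s => f s r) (Icc t' T) := (hfcont r hr).mono hsub
    have hfc2 : ContinuousOn (fun s => f s r₀) (Icc t' T) := (hfcont r₀ hr₀).mono hsub
    have hc1 : ContinuousOn (fun s => G r s t' * f s r) (Icc t' T) :=
      (hGs r hrR t' ht').mul hfc1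
    have hc2 : ContinuousOn (fun s => G r₀ s t' * f s r₀) (Icc t' T) :=
      (hGs r₀ hr₀R t' ht').mul hfc2
    have hi1 : IntervalIntegrable (fun s => G r s t' * f s r) volume t' T := by
      apply ContinuousOn.intervalIntegrable; rwa [uIcc_of_le ht'T]
    have hi2 : IntervalIntegrable (fun s => G r₀ s t' * f s r₀) volume t' T := by
      apply ContinuousOn.intervalIntegrable; rwa [uIcc_of_le ht'T]
    have heq : g t' = (∫ s in t'..T, (G r s t' * f s r - G r₀ s t' * f s r₀))
        + (H r t' - H r₀ t') := by
      rw [intervalIntegral.integral_sub hi1 hi2]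
      simp only [hg]
      rw [hffix r hr t' ht', hffix r₀ hr₀ t' ht']
      ring
    have habs : |g t'| ≤ |∫ s in t'..T, (G r s t' * f s r - G r₀ s t' * f s r₀)|
        + |H r t' - H r₀ t'| := by
      rw [heq]; exact abs_add_le _ _
    have hint1 : |∫ s in t'..T, (G r s t' * f s r - G r₀ s t' * f s r₀)|
        ≤ ∫ s in t'..T, |G r s t' * f s r - G r₀ s t' * f s r₀| :=
      intervalIntegral.abs_integral_le_integral_abs ht'T
    have hptwise : ∀ s ∈ Icc t' T,
        |G r s t' * f s r - G r₀ s t' * f s r₀| ≤ M * |g s| + εG * C := by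
      intro s hs
      have hrw : G r s t' * f s r - G r₀ s t' * f s r₀
          = G r s t' * g s + (G r s t' - G r₀ s t') * f s r₀ := by
        simp only [hg]; ring
      rw [hrw]
      calc |G r s t' * g s + (G r s t' - G r₀ s t') * f s r₀|
          ≤ |G r s t' * g s| + |(G r s t' - G r₀ s t') * f s r₀| := abs_add_le _ _
        _ = |G r s t'| * |g s| + |G r s t' - G r₀ s t'| * |f s r₀| := by
            rw [abs_mul, abs_mul]
        _ ≤ M * |g s| + εG * C := by
            have hA := hGM r hrR s t' ht'.1 hs.1 hs.2
            have hB2 := hGdiff s t' ht'.1 hs.1 hs.2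
            have hC2 := hfC s (hsub hs)
            have e1 : |G r s t'| * |g s| ≤ M * |g s| :=
              mul_le_mul_of_nonneg_right hA (abs_nonneg _)
            have e2 : |G r s t' - G r₀ s t'| * |f s r₀| ≤ εG * C :=
              mul_le_mul hB2 hC2 (abs_nonneg _) hεG.le
            linarith
    have hgi : IntervalIntegrable (fun s => |g s|) volume t' T := by
      apply ContinuousOn.intervalIntegrable
      rw [uIcc_of_le ht'T]; exact (hgc.mono hsub).abs
    have hii1 : IntervalIntegrable (fun s => |G r s t' * f s r - G r₀ s t' * f s r₀|)
        volume t' T := by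
      apply ContinuousOn.intervalIntegrable
      rw [uIcc_of_le ht'T]; exact (hc1.sub hc2).abs
    have hii2 : IntervalIntegrable (fun s => M * |g s| + εG * C) volume t' T :=
      ((hgi.const_mul M).add intervalIntegrable_const)
    have hint2 : (∫ s in t'..T, |G r s t' * f s r - G r₀ s t' * f s r₀|)
        ≤ ∫ s in t'..T, (M * |g s| + εG * C) :=
      intervalIntegral.integral_mono_on ht'T hii1 hii2 hptwise
    have hint3 : (∫ s in t'..T, (M * |g s| + εG * C))
        = M * (∫ s in t'..T, |g s|) + εG * C * (T - t') := by
      rw [intervalIntegral.integral_add (hgi.const_mul M) intervalIntegrable_const,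
        intervalIntegral.integral_const_mul, intervalIntegral.integral_const]
      simp [smul_eq_mul]; ring
    have hH' := hHdiff t' ht'
    have hfinal : εG * C * (T - t') ≤ T * C * εG := by
      have h1 : T - t' ≤ T := by linarith [ht'.1]
      nlinarith [mul_nonneg (mul_nonneg hεG.le hCnn) ht'.1]
    calc |g t'| ≤ (∫ s in t'..T, |G r s t' * f s r - G r₀ s t' * f s r₀|)
          + |H r t' - H r₀ t'| := le_trans habs (by linarith [hint1])
      _ ≤ (M * (∫ s in t'..T, |g s|) + εG * C * (T - t')) + εH := by
          rw [← hint3]; exact add_le_add hint2 hH'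
      _ ≤ M * (∫ s in t'..T, |g s|) + (T * C * εG + εH) := by linarith
  -- apply Gronwall
  have heB : (0:ℝ) ≤ T * C * εG + εH := by positivity
  have hgron := volterra_gronwall hMpos (le_max_right B₀ 0) heB hgc hgB hineq
  have hgbound : |g t| ≤ (T * C * εG + εH) * Real.exp (M * T) := hgron t ht
  -- T*C*εG + εH ≤ e'
  have hsum : T * C * εG + εH ≤ e' := by
    have h1 : T * C * εG ≤ e' / 2 := by
      have hkey : εG * (T * C + 1) = e' / 2 := by
        rw [hεGdef]; field_simp
      have hstep : εG * (T * C + 1) = εG * (T * C) + εG := by ring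
      have hcomm : T * C * εG = εG * (T * C) := by ring
      linarith [hεG.le]
    have h2 : εH = e' / 2 := hεHdef
    linarith
  have hhalf : |g t| ≤ ε / 2 := by
    have h2 : (T * C * εG + εH) * Real.exp (M * T) ≤ e' * Real.exp (M * T) := by
      gcongr
    have h3 : e' * Real.exp (M * T) = ε / 2 := by
      rw [he'def, div_mul_cancel₀ _ (Real.exp_pos _).ne']
    linarith
  -- conclude
  have htri : dist (f t r) (f t₀ r₀) ≤ dist (f t r) (f t r₀) + dist (f t r₀) (f t₀ r₀) :=
    dist_triangle _ _ _
  have h1 : dist (f t r) (f t r₀) ≤ ε / 2 := by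
    rw [Real.dist_eq]; exact hhalf
  have h2 : dist (f t r₀) (f t₀ r₀) < ε / 2 := hδtp ⟨ht.1, ht.2⟩ hdtt
  calc dist (f t r) (f t₀ r₀) ≤ _ + _ := htri
    _ < ε := by linarith
end

section
/- Let T > 0, let G₁, G₂ : Δ_T → [0,∞) be continuous, let H₁, H₂ : [0,T] → ℝ be continuous, and let f₁, f₂ : [0,T] → ℝ be continuous functions satisfying fᵢ(t) = ∫_t^T Gᵢ(s,t) fᵢ(s) ds + Hᵢ(t) for all t ∈ [0,T] and i = 1,2. Then sup_{t∈[0,T]} |f₁(t) − f₂(t)| ≤ ( T · sup_{(s,t)∈Δ_T} |G₁(s,t) − G₂(s,t)| · sup_{s∈[0,T]} |f₁(s)| + sup_{t∈[0,T]} |H₁(t) − H₂(t)| ) · exp( T · sup_{(s,t)∈Δ_T} G₂(s,t) ). -/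
open MeasureTheory intervalIntegral Set

/-- Gronwall-type stability estimate for two backward Volterra fixed points. -/
theorem stmt_2 (T : ℝ) (hT : 0 < T)
    (G₁ G₂ : ℝ → ℝ → ℝ) (H₁ H₂ : ℝ → ℝ) (f₁ f₂ : ℝ → ℝ)
    (hG₁cont : ContinuousOn (fun p : ℝ × ℝ => G₁ p.1 p.2)
      {p : ℝ × ℝ | 0 ≤ p.2 ∧ p.2 ≤ p.1 ∧ p.1 ≤ T})
    (hG₂cont : ContinuousOn (fun p : ℝ × ℝ => G₂ p.1 p.2)
      {p : ℝ × ℝ | 0 ≤ p.2 ∧ p.2 ≤ p.1 ∧ p.1 ≤ T})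
    (hG₁nonneg : ∀ s t : ℝ, 0 ≤ t → t ≤ s → s ≤ T → 0 ≤ G₁ s t)
    (hG₂nonneg : ∀ s t : ℝ, 0 ≤ t → t ≤ s → s ≤ T → 0 ≤ G₂ s t)
    (hH₁cont : ContinuousOn H₁ (Set.Icc 0 T))
    (hH₂cont : ContinuousOn H₂ (Set.Icc 0 T))
    (hf₁cont : ContinuousOn f₁ (Set.Icc 0 T))
    (hf₂cont : ContinuousOn f₂ (Set.Icc 0 T))
    (hf₁ : ∀ t ∈ Set.Icc (0:ℝ) T, f₁ t = (∫ s in t..T, G₁ s t * f₁ s) + H₁ t)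
    (hf₂ : ∀ t ∈ Set.Icc (0:ℝ) T, f₂ t = (∫ s in t..T, G₂ s t * f₂ s) + H₂ t) :
    sSup ((fun t => |f₁ t - f₂ t|) '' Set.Icc 0 T) ≤
      (T * sSup ((fun p : ℝ × ℝ => |G₁ p.1 p.2 - G₂ p.1 p.2|) ''
          {p : ℝ × ℝ | 0 ≤ p.2 ∧ p.2 ≤ p.1 ∧ p.1 ≤ T})
        * sSup ((fun s => |f₁ s|) '' Set.Icc 0 T)
        + sSup ((fun t => |H₁ t - H₂ t|) '' Set.Icc 0 T))
      * Real.exp (T * sSup ((fun p : ℝ × ℝ => G₂ p.1 p.2) ''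
          {p : ℝ × ℝ | 0 ≤ p.2 ∧ p.2 ≤ p.1 ∧ p.1 ≤ T})) := by
  have hT0 : (0:ℝ) ≤ T := hT.le
  set Δ : Set (ℝ × ℝ) := {p : ℝ × ℝ | 0 ≤ p.2 ∧ p.2 ≤ p.1 ∧ p.1 ≤ T} with hΔdef
  -- compactness of Δ
  have hΔclosed : IsClosed Δ := by
    have h1 : IsClosed {p : ℝ × ℝ | 0 ≤ p.2} := isClosed_le continuous_const continuous_snd
    have h2 : IsClosed {p : ℝ × ℝ | p.2 ≤ p.1} := isClosed_le continuous_snd continuous_fst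
    have h3 : IsClosed {p : ℝ × ℝ | p.1 ≤ T} := isClosed_le continuous_fst continuous_const
    have : Δ = {p : ℝ × ℝ | 0 ≤ p.2} ∩ ({p : ℝ × ℝ | p.2 ≤ p.1} ∩ {p : ℝ × ℝ | p.1 ≤ T}) := by
      ext p; simp [hΔdef, and_assoc]
    rw [this]; exact h1.inter (h2.inter h3)
  have hΔcomp : IsCompact Δ := by
    refine (isCompact_Icc (a := ((0:ℝ),(0:ℝ))) (b := (T,T))).of_isClosed_subset hΔclosed ?_
    rintro ⟨s, t⟩ ⟨h1, h2, h3⟩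
    constructor <;> constructor <;> simp_all <;> linarith
  have hΔne : Δ.Nonempty := ⟨(0,0), by simp [hΔdef, hT0]⟩
  have hIccne : (Icc (0:ℝ) T).Nonempty := ⟨0, by simp [hT0]⟩
  -- abbreviations for the sups
  set MG := sSup ((fun p : ℝ × ℝ => |G₁ p.1 p.2 - G₂ p.1 p.2|) '' Δ) with hMGdef
  set Mf := sSup ((fun s => |f₁ s|) '' Icc (0:ℝ) T) with hMfdef
  set MH := sSup ((fun t => |H₁ t - H₂ t|) '' Icc (0:ℝ) T) with hMHdef
  set K := sSup ((fun p : ℝ × ℝ => G₂ p.1 p.2) '' Δ) with hKdef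
  -- bddAbove facts
  have hGdcont : ContinuousOn (fun p : ℝ × ℝ => |G₁ p.1 p.2 - G₂ p.1 p.2|) Δ :=
    (hG₁cont.sub hG₂cont).abs
  have hMGbdd : BddAbove ((fun p : ℝ × ℝ => |G₁ p.1 p.2 - G₂ p.1 p.2|) '' Δ) :=
    (hΔcomp.image_of_continuousOn hGdcont).bddAbove
  have hMfbdd : BddAbove ((fun s => |f₁ s|) '' Icc (0:ℝ) T) :=
    (isCompact_Icc.image_of_continuousOn hf₁cont.abs).bddAbove
  have hMHbdd : BddAbove ((fun t => |H₁ t - H₂ t|) '' Icc (0:ℝ) T) :=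
    (isCompact_Icc.image_of_continuousOn (hH₁cont.sub hH₂cont).abs).bddAbove
  have hKbdd : BddAbove ((fun p : ℝ × ℝ => G₂ p.1 p.2) '' Δ) :=
    (hΔcomp.image_of_continuousOn hG₂cont).bddAbove
  -- pointwise bounds
  have hMG_le : ∀ s t : ℝ, 0 ≤ t → t ≤ s → s ≤ T → |G₁ s t - G₂ s t| ≤ MG := by
    intro s t h1 h2 h3
    exact le_csSup hMGbdd ⟨(s, t), ⟨h1, h2, h3⟩, rfl⟩
  have hMf_le : ∀ s ∈ Icc (0:ℝ) T, |f₁ s| ≤ Mf := fun s hs => le_csSup hMfbdd ⟨s, hs, rfl⟩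
  have hMH_le : ∀ t ∈ Icc (0:ℝ) T, |H₁ t - H₂ t| ≤ MH := fun t ht => le_csSup hMHbdd ⟨t, ht, rfl⟩
  have hK_le : ∀ s t : ℝ, 0 ≤ t → t ≤ s → s ≤ T → G₂ s t ≤ K := by
    intro s t h1 h2 h3
    exact le_csSup hKbdd ⟨(s, t), ⟨h1, h2, h3⟩, rfl⟩
  -- nonnegativity
  have hMG0 : 0 ≤ MG := le_trans (abs_nonneg _) (hMG_le 0 0 le_rfl le_rfl hT0)
  have hMf0 : 0 ≤ Mf := le_trans (abs_nonneg _) (hMf_le 0 (by simp [hT0]))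
  have hMH0 : 0 ≤ MH := le_trans (abs_nonneg _) (hMH_le 0 (by simp [hT0]))
  have hK0 : 0 ≤ K := le_trans (hG₂nonneg 0 0 le_rfl le_rfl hT0) (hK_le 0 0 le_rfl le_rfl hT0)
  set C := T * MG * Mf + MH with hCdef
  have hC0 : 0 ≤ C := by positivity
  -- the clamped difference function
  set clamp : ℝ → ℝ := fun s => max 0 (min s T) with hclampdef
  have hclampcont : Continuous clamp :=
    continuous_const.max (continuous_id.min continuous_const)
  have hclampmem : ∀ s, clamp s ∈ Icc (0:ℝ) T := by
    intro s; constructor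
    · exact le_max_left _ _
    · exact max_le (hT0) (min_le_right _ _)
  have hclampeq : ∀ s ∈ Icc (0:ℝ) T, clamp s = s := by
    intro s hs; simp [hclampdef, hs.1, hs.2, max_eq_right, min_eq_left]
  set φ : ℝ → ℝ := fun s => |f₁ (clamp s) - f₂ (clamp s)| with hφdef
  have hφcont : Continuous φ := by
    rw [← continuousOn_univ]
    have : ContinuousOn (fun s : ℝ => f₁ (clamp s) - f₂ (clamp s)) univ := by
      refine ((hf₁cont.comp hclampcont.continuousOn ?_).sub
        (hf₂cont.comp hclampcont.continuousOn ?_)) <;> exact fun s _ => hclampmem s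
    exact this.abs
  have hφ0 : ∀ s, 0 ≤ φ s := fun s => abs_nonneg _
  have hφeq : ∀ s ∈ Icc (0:ℝ) T, φ s = |f₁ s - f₂ s| := by
    intro s hs; simp only [hφdef, hclampeq s hs]
  -- slice continuity/integrability helpers
  have hslice : ∀ t ∈ Icc (0:ℝ) T, ∀ (G : ℝ → ℝ → ℝ),
      ContinuousOn (fun p : ℝ × ℝ => G p.1 p.2) Δ →
      ContinuousOn (fun s => G s t) (Icc t T) := by
    intro t ht G hG
    have hmap : MapsTo (fun s : ℝ => (s, t)) (Icc t T) Δ := by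
      intro s hs; exact ⟨ht.1, hs.1, hs.2⟩
    exact hG.comp ((continuous_id.prodMk continuous_const).continuousOn) hmap
  -- key integral inequality : φ t ≤ C + K * ∫_t^T φ
  have key : ∀ t ∈ Icc (0:ℝ) T, φ t ≤ C + K * ∫ s in t..T, φ s := by
    intro t ht
    have htT : t ≤ T := ht.2
    have hIccsub : Icc t T ⊆ Icc (0:ℝ) T := Icc_subset_Icc ht.1 le_rfl
    have hf₁c : ContinuousOn f₁ (Icc t T) := hf₁cont.mono hIccsub
    have hf₂c : ContinuousOn f₂ (Icc t T) := hf₂cont.mono hIccsub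
    have hG₁c : ContinuousOn (fun s => G₁ s t) (Icc t T) := hslice t ht G₁ hG₁cont
    have hG₂c : ContinuousOn (fun s => G₂ s t) (Icc t T) := hslice t ht G₂ hG₂cont
    have hA : IntervalIntegrable (fun s => (G₁ s t - G₂ s t) * f₁ s) volume t T := by
      apply ContinuousOn.intervalIntegrable
      rw [uIcc_of_le htT]
      exact (hG₁c.sub hG₂c).mul hf₁c
    have hB : IntervalIntegrable (fun s => G₂ s t * (f₁ s - f₂ s)) volume t T := by
      apply ContinuousOn.intervalIntegrable
      rw [uIcc_of_le htT]
      exact hG₂c.mul (hf₁c.sub hf₂c)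
    have hBabs : IntervalIntegrable (fun s => |G₂ s t * (f₁ s - f₂ s)|) volume t T := hB.abs
    have hφint : IntervalIntegrable φ volume t T := hφcont.intervalIntegrable _ _
    have hKφint : IntervalIntegrable (fun s => K * φ s) volume t T :=
      (continuous_const.mul hφcont).intervalIntegrable _ _
    have hsplit : f₁ t - f₂ t =
        (∫ s in t..T, (G₁ s t - G₂ s t) * f₁ s) + (∫ s in t..T, G₂ s t * (f₁ s - f₂ s))
          + (H₁ t - H₂ t) := by
      rw [hf₁ t ht, hf₂ t ht, ← intervalIntegral.integral_add hA hB]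
      have : ∀ s, (G₁ s t - G₂ s t) * f₁ s + G₂ s t * (f₁ s - f₂ s)
          = G₁ s t * f₁ s - G₂ s t * f₂ s := by intro s; ring
      simp only [this]
      have h1 : IntervalIntegrable (fun s => G₁ s t * f₁ s) volume t T := by
        apply ContinuousOn.intervalIntegrable; rw [uIcc_of_le htT]; exact hG₁c.mul hf₁c
      have h2 : IntervalIntegrable (fun s => G₂ s t * f₂ s) volume t T := by
        apply ContinuousOn.intervalIntegrable; rw [uIcc_of_le htT]; exact hG₂c.mul hf₂c
      rw [intervalIntegral.integral_sub h1 h2]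
      ring
    have hAbound : |∫ s in t..T, (G₁ s t - G₂ s t) * f₁ s| ≤ T * MG * Mf := by
      have := intervalIntegral.norm_integral_le_of_norm_le_const
        (C := MG * Mf) (f := fun s => (G₁ s t - G₂ s t) * f₁ s) (a := t) (b := T) ?_
      · calc |∫ s in t..T, (G₁ s t - G₂ s t) * f₁ s| ≤ MG * Mf * |T - t| := this
          _ ≤ MG * Mf * T := by
              apply mul_le_mul_of_nonneg_left _ (by positivity)
              rw [abs_of_nonneg (by linarith)]; linarith [ht.1]
          _ = T * MG * Mf := by ring
      · intro x hx
        rw [uIoc_of_le htT] at hx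
        have hxm : x ∈ Icc (0:ℝ) T := ⟨le_trans ht.1 hx.1.le, hx.2⟩
        have : ‖(G₁ x t - G₂ x t) * f₁ x‖ = |G₁ x t - G₂ x t| * |f₁ x| := abs_mul _ _
        rw [this]
        exact mul_le_mul (hMG_le x t ht.1 hx.1.le hx.2) (hMf_le x hxm) (abs_nonneg _) hMG0
    have hBbound : |∫ s in t..T, G₂ s t * (f₁ s - f₂ s)| ≤ K * ∫ s in t..T, φ s := by
      calc |∫ s in t..T, G₂ s t * (f₁ s - f₂ s)|
          ≤ ∫ s in t..T, |G₂ s t * (f₁ s - f₂ s)| :=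
            intervalIntegral.abs_integral_le_integral_abs htT
        _ ≤ ∫ s in t..T, K * φ s := by
            apply intervalIntegral.integral_mono_on htT hBabs hKφint
            intro s hs
            have hsm : s ∈ Icc (0:ℝ) T := hIccsub hs
            rw [abs_mul, abs_of_nonneg (hG₂nonneg s t ht.1 hs.1 hs.2), hφeq s hsm]
            exact mul_le_mul_of_nonneg_right (hK_le s t ht.1 hs.1 hs.2) (abs_nonneg _)
        _ = K * ∫ s in t..T, φ s := intervalIntegral.integral_const_mul _ _
    have hHbound : |H₁ t - H₂ t| ≤ MH := hMH_le t ht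
    calc φ t = |f₁ t - f₂ t| := hφeq t ht
      _ ≤ |∫ s in t..T, (G₁ s t - G₂ s t) * f₁ s| + |∫ s in t..T, G₂ s t * (f₁ s - f₂ s)|
            + |H₁ t - H₂ t| := by
          rw [hsplit]; exact le_trans (abs_add_le _ _) (by gcongr; exact abs_add_le _ _)
      _ ≤ T * MG * Mf + (K * ∫ s in t..T, φ s) + MH := by gcongr
      _ = C + K * ∫ s in t..T, φ s := by rw [hCdef]; ring
  -- Gronwall
  set u : ℝ → ℝ := fun t => ∫ s in (T - t)..T, φ s with hudef
  have hu0 : u 0 = 0 := by simp [hudef]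
  have hunonneg : ∀ t ∈ Icc (0:ℝ) T, 0 ≤ u t := by
    intro t ht
    apply intervalIntegral.integral_nonneg (by linarith [ht.1]) (fun s _ => hφ0 s)
  have huderiv : ∀ t : ℝ, HasDerivAt u (φ (T - t)) t := by
    intro t
    have hF : HasDerivAt (fun x => ∫ s in x..T, φ s) (-φ (T - t)) (T - t) := by
      exact intervalIntegral.integral_hasDerivAt_left
        (hφcont.intervalIntegrable _ _)
        (hφcont.stronglyMeasurableAtFilter _ _)
        (hφcont.continuousAt)
    have hg : HasDerivAt (fun t : ℝ => T - t) (-1) t := by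
      simpa using (hasDerivAt_id t).const_sub T
    have := hF.comp t hg
    simp at this; exact this
  have hucont : ContinuousOn u (Icc 0 T) := fun t _ => (huderiv t).continuousAt.continuousWithinAt
  have hgron : ∀ x ∈ Icc (0:ℝ) T, ‖u x‖ ≤ gronwallBound 0 K C (x - 0) := by
    apply norm_le_gronwallBound_of_norm_deriv_right_le (f' := fun t => φ (T - t)) hucont
    · intro x _; exact (huderiv x).hasDerivWithinAt
    · simp [hu0]
    · intro x hx
      have hTx : T - x ∈ Icc (0:ℝ) T := ⟨by linarith [hx.2], by linarith [hx.1]⟩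
      have := key (T - x) hTx
      rw [Real.norm_eq_abs, Real.norm_eq_abs, abs_of_nonneg (hφ0 _),
        abs_of_nonneg (hunonneg x (Ico_subset_Icc_self hx))]
      calc φ (T - x) ≤ C + K * ∫ s in (T - x)..T, φ s := this
        _ = K * u x + C := by simp only [hudef]; ring
  -- conclude pointwise bound
  have hfinal : ∀ t ∈ Icc (0:ℝ) T, |f₁ t - f₂ t| ≤ C * Real.exp (T * K) := by
    intro t ht
    have hTt : T - t ∈ Icc (0:ℝ) T := ⟨by linarith [ht.2], by linarith [ht.1]⟩
    have hu_le : u (T - t) ≤ gronwallBound 0 K C (T - t) := by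
      have := hgron (T - t) hTt
      rwa [Real.norm_eq_abs, abs_of_nonneg (hunonneg _ hTt), sub_zero] at this
    have hkey := key t ht
    have hut : u (T - t) = ∫ s in t..T, φ s := by simp only [hudef, sub_sub_cancel]
    rw [← hφeq t ht]
    calc φ t ≤ C + K * u (T - t) := by rw [hut]; exact hkey
      _ ≤ C + K * gronwallBound 0 K C (T - t) := by
          exact add_le_add_right (mul_le_mul_of_nonneg_left hu_le hK0) C
      _ ≤ C * Real.exp (T * K) := by
          rcases eq_or_lt_of_le hK0 with hK | hK
          · rw [← hK]; simp
          · rw [gronwallBound_of_K_ne_0 (ne_of_gt hK)]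
            have h1 : K * (0 * Real.exp (K * (T - t)) + C / K * (Real.exp (K * (T - t)) - 1))
                = C * Real.exp (K * (T - t)) - C := by
              field_simp; ring
            rw [h1]
            have h2 : Real.exp (K * (T - t)) ≤ Real.exp (T * K) := by
              apply Real.exp_le_exp.2; nlinarith [ht.1]
            nlinarith [Real.exp_pos (K * (T - t))]
  -- final sup bound
  apply Real.sSup_le
  · rintro x ⟨t, ht, rfl⟩
    calc |f₁ t - f₂ t| ≤ C * Real.exp (T * K) := hfinal t ht
      _ = (T * MG * Mf + MH) * Real.exp (T * K) := by rw [hCdef]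
  · positivity
end

section
/- Let T > 0, ρ ∈ ℝ, μ, σ, σ_Z, μ_Z > 0, λ ∈ [0,1], η := (μ_Z σ − μ σ_Z)/σ, and let F : [0,T] → ℝ be continuous. Let D := [0,T) × (0,1) × (0,∞) and suppose û : D → ℝ has continuous partial derivatives û_t, û_y, û_z, û_yy, û_yz, û_zz with û_yy(t,y,z) > 0 on D, and û satisfies on D the dual equation û_t + (μ²/(2σ²)) y² û_yy − (μσ_Z/σ) z y û_yz + (1/2)σ_Z² z² û_zz + ρ y û_y + μ_Z z û_z − ((1−λ)ηz + λF(t)) y = ρ û. Let O ⊆ [0,T) × (0,∞) × (0,∞) be open and let y* : O → (0,1) be continuously differentiable in t and twice continuously differentiable in (x,z), satisfying û_y(t, y*(t,x,z), z) = −x on O. Define u(t,x,z) := û(t, y*(t,x,z), z) + x·y*(t,x,z). Then on O: u_x(t,x,z) = y*(t,x,z), u_xx(t,x,z) = −1/û_yy(t, y*(t,x,z), z) < 0, and u satisfies the nonlinear HJB equation u_t − (μ²/(2σ²)) u_x²/u_xx − (μσ_Z z/σ) u_x u_xz/u_xx + (1/2)σ_Z² z² (u_zz − u_xz²/u_xx)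 + μ_Z z u_z − ((1−λ)ηz + λF(t)) u_x = ρ u. -/
open Set Filter Metric intervalIntegral MeasureTheory
open scoped Topology



lemma mvt_abs (f f' : ℝ → ℝ) (s₀ s R : ℝ) (hne : s ≠ s₀) (hsR : |s - s₀| < R)
    (hd : ∀ ξ : ℝ, |ξ - s₀| < R → HasDerivAt f (f' ξ) ξ) :
    ∃ ξ : ℝ, |ξ - s₀| ≤ |s - s₀| ∧ f s - f s₀ = f' ξ * (s - s₀) := by
  have hmem : ∀ ξ : ℝ, ξ ∈ uIcc s₀ s → |ξ - s₀| ≤ |s - s₀| := by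
    intro ξ hξ
    rw [uIcc_eq_union, mem_union, mem_Icc, mem_Icc] at hξ
    rcases hξ with h | h <;>
    · rw [abs_sub_le_iff]
      constructor <;> rcases abs_cases (s - s₀) with ⟨h', _⟩ | ⟨h', _⟩ <;> linarith [h.1, h.2]
  rcases hne.lt_or_gt with hlt | hlt
  · obtain ⟨ξ, hξ, hdd⟩ := exists_hasDerivAt_eq_slope f f' hlt
      (fun ξ hξ => (hd ξ (lt_of_le_of_lt (hmem ξ (by
        rw [uIcc_of_ge hlt.le]; exact hξ)) hsR)).continuousAt.continuousWithinAt)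
      (fun ξ hξ => hd ξ (lt_of_le_of_lt (hmem ξ (by
        rw [uIcc_of_ge hlt.le]; exact Ioo_subset_Icc_self hξ)) hsR))
    refine ⟨ξ, hmem ξ (by rw [uIcc_of_ge hlt.le]; exact Ioo_subset_Icc_self hξ), ?_⟩
    have h0 : s₀ - s ≠ 0 := sub_ne_zero.2 hne.symm
    rw [hdd, div_mul_eq_mul_div, eq_div_iff h0]
    ring
  · obtain ⟨ξ, hξ, hdd⟩ := exists_hasDerivAt_eq_slope f f' hlt
      (fun ξ hξ => (hd ξ (lt_of_le_of_lt (hmem ξ (by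
        rw [uIcc_of_le hlt.le]; exact hξ)) hsR)).continuousAt.continuousWithinAt)
      (fun ξ hξ => hd ξ (lt_of_le_of_lt (hmem ξ (by
        rw [uIcc_of_le hlt.le]; exact Ioo_subset_Icc_self hξ)) hsR))
    refine ⟨ξ, hmem ξ (by rw [uIcc_of_le hlt.le]; exact Ioo_subset_Icc_self hξ), ?_⟩
    rw [hdd, div_mul_eq_mul_div, mul_div_assoc, div_self (sub_ne_zero.2 hne), mul_one]

/-- Chain rule for `s ↦ g s (y s)` from partial derivatives. -/
lemma comp_hasDerivAt_partial (g a : ℝ → ℝ → ℝ) (y : ℝ → ℝ) (s₀ w₀ b c : ℝ)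
    (U : Set (ℝ × ℝ)) (hU : U ∈ 𝓝 (s₀, w₀))
    (hg : ∀ p ∈ U, HasDerivAt (fun s => g s p.2) (a p.1 p.2) p.1)
    (ha : ContinuousAt (fun p : ℝ × ℝ => a p.1 p.2) (s₀, w₀))
    (hb : HasDerivAt (fun w => g s₀ w) b w₀)
    (hy : HasDerivAt y c s₀) (hy0 : y s₀ = w₀) :
    HasDerivAt (fun s => g s (y s)) (a s₀ w₀ + b * c) s₀ := by
  have h2 : HasDerivAt (fun s => g s₀ (y s)) (b * c) s₀ := by
    have := (hy0 ▸ hb : HasDerivAt (fun w => g s₀ w) b (y s₀)).comp s₀ hy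
    exact this
  have h1 : HasDerivAt (fun s => g s (y s) - g s₀ (y s)) (a s₀ w₀) s₀ := by
    rw [hasDerivAt_iff_isLittleO, Asymptotics.isLittleO_iff]
    intro ε hε
    have hW : {p : ℝ × ℝ | p ∈ U ∧ |a p.1 p.2 - a s₀ w₀| ≤ ε} ∈ 𝓝 (s₀, w₀) := by
      filter_upwards [hU, ha (Metric.closedBall_mem_nhds _ hε)] with p h1 h2
      exact ⟨h1, by simpa [Real.dist_eq] using h2⟩
    obtain ⟨r, hr, hball⟩ := Metric.mem_nhds_iff.1 hW
    have hyc : Tendsto y (𝓝 s₀) (𝓝 w₀) := hy0 ▸ hy.continuousAt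
    have hev : ∀ᶠ s in 𝓝 s₀, |s - s₀| < r ∧ |y s - w₀| < r := by
      filter_upwards [Metric.tendsto_nhds.1 hyc r hr,
        Metric.tendsto_nhds.1 (tendsto_id (x := 𝓝 s₀)) r hr] with s h1 h2
      exact ⟨by simpa [Real.dist_eq] using h2, by simpa [Real.dist_eq] using h1⟩
    filter_upwards [hev] with s hs
    rcases eq_or_ne s s₀ with rfl | hne
    · simp
    · have hmem : ∀ ξ : ℝ, |ξ - s₀| < r → (ξ, y s) ∈ ball (s₀, w₀) r := by
        intro ξ hξ
        rw [Metric.mem_ball, Prod.dist_eq]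
        exact max_lt (by rwa [Real.dist_eq]) (by rw [Real.dist_eq]; exact hs.2)
      obtain ⟨ξ, hξle, hrep⟩ := mvt_abs (fun t => g t (y s)) (fun t => a t (y s)) s₀ s r hne hs.1
        (fun ξ hξ => (hg (ξ, y s) (hball (hmem ξ hξ)).1))
      have habs : |a ξ (y s) - a s₀ w₀| ≤ ε := (hball (hmem ξ (lt_of_le_of_lt hξle hs.1))).2
      have hzero : g s₀ (y s₀) - g s₀ (y s₀) = 0 := sub_self _
      calc ‖g s (y s) - g s₀ (y s) - (g s₀ (y s₀) - g s₀ (y s₀)) - (s - s₀) • a s₀ w₀‖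
          = ‖(a ξ (y s) - a s₀ w₀) * (s - s₀)‖ := by
            rw [hzero, smul_eq_mul, sub_zero]
            congr 1
            rw [show g s (y s) - g s₀ (y s) = a ξ (y s) * (s - s₀) from hrep]
            ring
        _ ≤ ε * ‖s - s₀‖ := by
            rw [norm_mul]
            gcongr
            simpa [Real.norm_eq_abs] using habs
  have h := h1.add h2
  have heq : (fun s => g s (y s) - g s₀ (y s) + g s₀ (y s)) = fun s => g s (y s) := by
    funext s; ring
  rw [← heq]; exact h


/-- Schwarz-type lemma: if `f` has partials `fy`, `fz` on a box, and `fy` has `z`-partial `fyz`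
on the box with `fy, fyz` continuous on the box, then `w ↦ fz w z₀` is differentiable at `y₀`
with derivative `fyz y₀ z₀`. -/
lemma schwarz_point (f fy fz fyz : ℝ → ℝ → ℝ) (y₀ z₀ δ : ℝ) (hδ : 0 < δ)
    (hfy : ∀ w z : ℝ, |w - y₀| ≤ δ → |z - z₀| ≤ δ → HasDerivAt (fun w' => f w' z) (fy w z) w)
    (hfz : ∀ w z : ℝ, |w - y₀| ≤ δ → |z - z₀| ≤ δ → HasDerivAt (fun z' => f w z') (fz w z) z)
    (hfyz : ∀ w z : ℝ, |w - y₀| ≤ δ → |z - z₀| ≤ δ → HasDerivAt (fun z' => fy w z') (fyz w z) z)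
    (hfyc : ContinuousOn (fun p : ℝ × ℝ => fy p.1 p.2)
      (Icc (y₀-δ) (y₀+δ) ×ˢ Icc (z₀-δ) (z₀+δ)))
    (hfyzc : ContinuousOn (fun p : ℝ × ℝ => fyz p.1 p.2)
      (Icc (y₀-δ) (y₀+δ) ×ˢ Icc (z₀-δ) (z₀+δ))) :
    HasDerivAt (fun w => fz w z₀) (fyz y₀ z₀) y₀ := by
  have hz₀ : z₀ ∈ Icc (z₀-δ) (z₀+δ) := by constructor <;> linarith
  have hy₀ : y₀ ∈ Icc (y₀-δ) (y₀+δ) := by constructor <;> linarith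
  -- bound on fyz
  obtain ⟨M, hM⟩ := (isCompact_Icc.prod isCompact_Icc).exists_bound_of_continuousOn hfyzc
  -- slice continuity
  have hslice : ∀ z : ℝ, z ∈ Icc (z₀-δ) (z₀+δ) →
      ContinuousOn (fun s => fy s z) (Icc (y₀-δ) (y₀+δ)) := by
    intro z hz
    exact hfyc.comp ((continuous_id.prodMk continuous_const).continuousOn)
      (fun s hs => ⟨hs, hz⟩)
  have hslice' : ∀ z : ℝ, z ∈ Icc (z₀-δ) (z₀+δ) →
      ContinuousOn (fun s => fyz s z) (Icc (y₀-δ) (y₀+δ)) := by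
    intro z hz
    exact hfyzc.comp ((continuous_id.prodMk continuous_const).continuousOn)
      (fun s hs => ⟨hs, hz⟩)
  -- key identity
  have key : ∀ w : ℝ, |w - y₀| ≤ δ →
      fz w z₀ - fz y₀ z₀ = ∫ s in y₀..w, fyz s z₀ := by
    intro w hw
    have hwIcc : w ∈ Icc (y₀-δ) (y₀+δ) := by
      rw [abs_sub_le_iff] at hw; constructor <;> linarith [hw.1, hw.2]
    have huIcc : uIcc y₀ w ⊆ Icc (y₀-δ) (y₀+δ) := uIcc_subset_Icc hy₀ hwIcc
    -- Φ = Ψ on strip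
    have hΦΨ : ∀ z : ℝ, z ∈ Icc (z₀-δ) (z₀+δ) →
        f w z - f y₀ z = ∫ s in y₀..w, fy s z := by
      intro z hz
      refine (integral_eq_sub_of_hasDerivAt (fun s hs => hfy s z (by
        have := huIcc hs
        rw [mem_Icc] at this
        rw [abs_sub_le_iff]; constructor <;> linarith [this.1, this.2])
        (by rw [abs_sub_le_iff]; rw [mem_Icc] at hz; constructor <;> linarith [hz.1, hz.2]))
        (((hslice z hz).mono huIcc).intervalIntegrable)).symm
    -- derivative of Ψ at z₀
    have hΨ : HasDerivAt (fun z => ∫ s in y₀..w, fy s z) (∫ s in y₀..w, fyz s z₀) z₀ := by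
      have hmeas : ∀ᶠ z in 𝓝 z₀,
          AEStronglyMeasurable (fun s => fy s z) (volume.restrict (uIoc y₀ w)) := by
        filter_upwards [Metric.closedBall_mem_nhds z₀ hδ] with z hz
        have hz' : z ∈ Icc (z₀-δ) (z₀+δ) := by
          rw [Metric.mem_closedBall, Real.dist_eq, abs_sub_le_iff] at hz
          constructor <;> linarith [hz.1, hz.2]
        exact AEStronglyMeasurable.mono_set (uIoc_subset_uIcc.trans huIcc)
          ((hslice z hz').aestronglyMeasurable measurableSet_Icc)
      have hint : IntervalIntegrable (fun s => fy s z₀) volume y₀ w :=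
        ((hslice z₀ hz₀).mono huIcc).intervalIntegrable
      have hmeas' : AEStronglyMeasurable (fun s => fyz s z₀) (volume.restrict (uIoc y₀ w)) :=
        AEStronglyMeasurable.mono_set (uIoc_subset_uIcc.trans huIcc)
          ((hslice' z₀ hz₀).aestronglyMeasurable measurableSet_Icc)
      have hbound : ∀ᵐ s ∂(volume : Measure ℝ), s ∈ uIoc y₀ w →
          ∀ z ∈ Metric.ball z₀ δ, ‖fyz s z‖ ≤ M := by
        refine Filter.Eventually.of_forall (fun s hs z hz => ?_)
        have hsIcc : s ∈ Icc (y₀-δ) (y₀+δ) := huIcc (uIoc_subset_uIcc hs)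
        have hzIcc : z ∈ Icc (z₀-δ) (z₀+δ) := by
          rw [Metric.mem_ball, Real.dist_eq, abs_sub_lt_iff] at hz
          constructor <;> linarith [hz.1, hz.2]
        exact hM (s, z) ⟨hsIcc, hzIcc⟩
      have hdiff : ∀ᵐ s ∂(volume : Measure ℝ), s ∈ uIoc y₀ w →
          ∀ z ∈ Metric.ball z₀ δ, HasDerivAt (fun z => fy s z) (fyz s z) z := by
        refine Filter.Eventually.of_forall (fun s hs z hz => ?_)
        have hsIcc : s ∈ Icc (y₀-δ) (y₀+δ) := huIcc (uIoc_subset_uIcc hs)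
        rw [Metric.mem_ball, Real.dist_eq, abs_sub_lt_iff] at hz
        refine hfyz s z ?_ ?_
        · rw [mem_Icc] at hsIcc; rw [abs_sub_le_iff]
          constructor <;> linarith [hsIcc.1, hsIcc.2]
        · rw [abs_sub_le_iff]
          constructor <;> linarith [hz.1, hz.2]
      exact (intervalIntegral.hasDerivAt_integral_of_dominated_loc_of_deriv_le
        (F := fun z s => fy s z) (F' := fun z s => fyz s z) (x₀ := z₀) (a := y₀) (b := w)
        (bound := fun _ => M) (Metric.ball_mem_nhds z₀ hδ) hmeas hint hmeas' hbound intervalIntegrable_const hdiff).2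
    -- Φ has derivative fz w z₀ - fz y₀ z₀ at z₀
    have hΦ : HasDerivAt (fun z => f w z - f y₀ z) (fz w z₀ - fz y₀ z₀) z₀ :=
      (hfz w z₀ hw (by simp [abs_of_nonneg hδ.le, hδ.le])).sub
        (hfz y₀ z₀ (by simp [hδ.le]) (by simp [hδ.le]))
    -- Φ = Ψ near z₀
    have hEq : (fun z => f w z - f y₀ z) =ᶠ[𝓝 z₀] (fun z => ∫ s in y₀..w, fy s z) := by
      have hnhds : Icc (z₀-δ) (z₀+δ) ∈ 𝓝 z₀ :=
        Icc_mem_nhds (by linarith [hδ]) (by linarith [hδ])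
      filter_upwards [hnhds] with z hz
      exact hΦΨ z hz
    have := (hEq.hasDerivAt_iff.1 hΦ).unique hΨ
    linarith [this]
  -- conclude: fz · z₀ agrees near y₀ with FTC primitive
  have hcont : ContinuousAt (fun s => fyz s z₀) y₀ := by
    refine ((hslice' z₀ hz₀).continuousAt (Icc_mem_nhds (by linarith) (by linarith)))
  have hint : HasDerivAt (fun w => ∫ s in y₀..w, fyz s z₀) (fyz y₀ z₀) y₀ := by
    have hsm : StronglyMeasurableAtFilter (fun s => fyz s z₀) (𝓝 y₀) volume :=
      ⟨Ioo (y₀-δ) (y₀+δ), Ioo_mem_nhds (by linarith) (by linarith),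
        (((hslice' z₀ hz₀).mono Ioo_subset_Icc_self).aestronglyMeasurable measurableSet_Ioo)⟩
    have := integral_hasDerivAt_right (f := fun s => fyz s z₀) (a := y₀) (b := y₀)
      (by simp) hsm hcont
    simpa using this
  have hEq2 : (fun w => fz w z₀) =ᶠ[𝓝 y₀] (fun w => fz y₀ z₀ + ∫ s in y₀..w, fyz s z₀) := by
    filter_upwards [Icc_mem_nhds (show y₀ - δ < y₀ by linarith) (show y₀ < y₀ + δ by linarith)]
      with w hw
    have : fz w z₀ - fz y₀ z₀ = ∫ s in y₀..w, fyz s z₀ := key w (by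
      rw [mem_Icc] at hw; rw [abs_sub_le_iff]; constructor <;> linarith [hw.1, hw.2])
    linarith [this]
  exact hEq2.hasDerivAt_iff.2 ((hint.const_add (fz y₀ z₀)))


/-- Partial derivative of a function of three real variables in its first argument. -/
noncomputable def pd1 (g : ℝ → ℝ → ℝ → ℝ) : ℝ → ℝ → ℝ → ℝ :=
  fun t y z => deriv (fun t' => g t' y z) t

/-- Partial derivative of a function of three real variables in its second argument. -/
noncomputable def pd2 (g : ℝ → ℝ → ℝ → ℝ) : ℝ → ℝ → ℝ → ℝ :=
  fun t y z => deriv (fun y' => g t y' z) y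

/-- Partial derivative of a function of three real variables in its third argument. -/
noncomputable def pd3 (g : ℝ → ℝ → ℝ → ℝ) : ℝ → ℝ → ℝ → ℝ :=
  fun t y z => deriv (fun z' => g t y z') z

/-- Legendre–Fenchel duality: if `û` is a strictly convex classical solution of
the dual PDE on `D = [0,T) × (0,1) × (0,∞)` and `y*` solves `û_y(t, y*(t,x,z), z) = −x` on an
open set `O`, then `u(t,x,z) = û(t, y*(t,x,z), z) + x y*(t,x,z)` satisfies `u_x = y*`,
`u_xx = −1/û_yy < 0`, and the primal nonlinear HJB equation on `O`. -/
theorem stmt_6 (T ρ μ σ σZ μZ lam η : ℝ) (hT : 0 < T)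
    (hμ : 0 < μ) (hσ : 0 < σ) (hσZ : 0 < σZ) (hμZ : 0 < μZ)
    (hlam : lam ∈ Set.Icc (0:ℝ) 1) (hη : η = (μZ * σ - μ * σZ) / σ)
    (F : ℝ → ℝ) (hF : ContinuousOn F (Set.Icc 0 T))
    (uhat ut uy uz uyy uyz uzz : ℝ → ℝ → ℝ → ℝ)
    -- û has partial derivatives ut, uy, uz, uyy, uyz, uzz on D = [0,T) × (0,1) × (0,∞):
    (hut : ∀ t y z : ℝ, 0 ≤ t → t < T → 0 < y → y < 1 → 0 < z →
      HasDerivAt (fun t' => uhat t' y z) (ut t y z) t)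
    (huy : ∀ t y z : ℝ, 0 ≤ t → t < T → 0 < y → y < 1 → 0 < z →
      HasDerivAt (fun y' => uhat t y' z) (uy t y z) y)
    (huz : ∀ t y z : ℝ, 0 ≤ t → t < T → 0 < y → y < 1 → 0 < z →
      HasDerivAt (fun z' => uhat t y z') (uz t y z) z)
    (huyy : ∀ t y z : ℝ, 0 ≤ t → t < T → 0 < y → y < 1 → 0 < z →
      HasDerivAt (fun y' => uy t y' z) (uyy t y z) y)
    (huyz : ∀ t y z : ℝ, 0 ≤ t → t < T → 0 < y → y < 1 → 0 < z →
      HasDerivAt (fun z' => uy t y z') (uyz t y z) z)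
    (huzz : ∀ t y z : ℝ, 0 ≤ t → t < T → 0 < y → y < 1 → 0 < z →
      HasDerivAt (fun z' => uz t y z') (uzz t y z) z)
    -- these partial derivatives are continuous on D:
    (hutc : ContinuousOn (fun p : ℝ × ℝ × ℝ => ut p.1 p.2.1 p.2.2)
      (Set.Ico 0 T ×ˢ Set.Ioo 0 1 ×ˢ Set.Ioi 0))
    (huyc : ContinuousOn (fun p : ℝ × ℝ × ℝ => uy p.1 p.2.1 p.2.2)
      (Set.Ico 0 T ×ˢ Set.Ioo 0 1 ×ˢ Set.Ioi 0))
    (huzc : ContinuousOn (fun p : ℝ × ℝ × ℝ => uz p.1 p.2.1 p.2.2)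
      (Set.Ico 0 T ×ˢ Set.Ioo 0 1 ×ˢ Set.Ioi 0))
    (huyyc : ContinuousOn (fun p : ℝ × ℝ × ℝ => uyy p.1 p.2.1 p.2.2)
      (Set.Ico 0 T ×ˢ Set.Ioo 0 1 ×ˢ Set.Ioi 0))
    (huyzc : ContinuousOn (fun p : ℝ × ℝ × ℝ => uyz p.1 p.2.1 p.2.2)
      (Set.Ico 0 T ×ˢ Set.Ioo 0 1 ×ˢ Set.Ioi 0))
    (huzzc : ContinuousOn (fun p : ℝ × ℝ × ℝ => uzz p.1 p.2.1 p.2.2)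
      (Set.Ico 0 T ×ˢ Set.Ioo 0 1 ×ˢ Set.Ioi 0))
    -- strict convexity: û_yy > 0 on D:
    (huyypos : ∀ t y z : ℝ, 0 ≤ t → t < T → 0 < y → y < 1 → 0 < z → 0 < uyy t y z)
    -- û satisfies the dual PDE on D:
    (hdual : ∀ t y z : ℝ, 0 ≤ t → t < T → 0 < y → y < 1 → 0 < z →
      ut t y z + (μ^2/(2*σ^2)) * y^2 * uyy t y z - (μ*σZ/σ) * z * y * uyz t y z
        + (1/2) * σZ^2 * z^2 * uzz t y z + ρ * y * uy t y z + μZ * z * uz t y z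
        - ((1-lam)*η*z + lam * F t) * y = ρ * uhat t y z)
    -- the open set O and the interior minimizer y*:
    (O : Set (ℝ × ℝ × ℝ)) (hOopen : IsOpen O)
    (hOsub : O ⊆ {p : ℝ × ℝ × ℝ | 0 ≤ p.1 ∧ p.1 < T ∧ 0 < p.2.1 ∧ 0 < p.2.2})
    (ystar yst ysx ysz ysxx ysxz yszz : ℝ → ℝ → ℝ → ℝ)
    (hysrange : ∀ t x z : ℝ, (t, x, z) ∈ O → ystar t x z ∈ Set.Ioo (0:ℝ) 1)
    -- y* is C¹ in t and C² in (x,z) on O: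
    (hyst : ∀ t x z : ℝ, (t, x, z) ∈ O → HasDerivAt (fun t' => ystar t' x z) (yst t x z) t)
    (hysx : ∀ t x z : ℝ, (t, x, z) ∈ O → HasDerivAt (fun x' => ystar t x' z) (ysx t x z) x)
    (hysz : ∀ t x z : ℝ, (t, x, z) ∈ O → HasDerivAt (fun z' => ystar t x z') (ysz t x z) z)
    (hysxx : ∀ t x z : ℝ, (t, x, z) ∈ O → HasDerivAt (fun x' => ysx t x' z) (ysxx t x z) x)
    (hysxz : ∀ t x z : ℝ, (t, x, z) ∈ O → HasDerivAt (fun z' => ysx t x z') (ysxz t x z) z)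
    (hyszz : ∀ t x z : ℝ, (t, x, z) ∈ O → HasDerivAt (fun z' => ysz t x z') (yszz t x z) z)
    (hystc : ContinuousOn (fun p : ℝ × ℝ × ℝ => yst p.1 p.2.1 p.2.2) O)
    (hysxc : ContinuousOn (fun p : ℝ × ℝ × ℝ => ysx p.1 p.2.1 p.2.2) O)
    (hyszc : ContinuousOn (fun p : ℝ × ℝ × ℝ => ysz p.1 p.2.1 p.2.2) O)
    (hysxxc : ContinuousOn (fun p : ℝ × ℝ × ℝ => ysxx p.1 p.2.1 p.2.2) O)
    (hysxzc : ContinuousOn (fun p : ℝ × ℝ × ℝ => ysxz p.1 p.2.1 p.2.2) O)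
    (hyszzc : ContinuousOn (fun p : ℝ × ℝ × ℝ => yszz p.1 p.2.1 p.2.2) O)
    -- the first-order condition û_y(t, y*(t,x,z), z) = −x on O:
    (hfoc : ∀ t x z : ℝ, (t, x, z) ∈ O → uy t (ystar t x z) z = -x)
    -- the primal candidate value function:
    (u : ℝ → ℝ → ℝ → ℝ)
    (hu : ∀ t x z : ℝ, u t x z = uhat t (ystar t x z) z + x * ystar t x z) :
    ∀ t x z : ℝ, (t, x, z) ∈ O →
      pd2 u t x z = ystar t x z ∧
      pd2 (pd2 u) t x z = -1 / uyy t (ystar t x z) z ∧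
      pd2 (pd2 u) t x z < 0 ∧
      pd1 u t x z - (μ^2/(2*σ^2)) * (pd2 u t x z)^2 / pd2 (pd2 u) t x z
        - (μ*σZ*z/σ) * pd2 u t x z * pd3 (pd2 u) t x z / pd2 (pd2 u) t x z
        + (1/2) * σZ^2 * z^2 * (pd3 (pd3 u) t x z - (pd3 (pd2 u) t x z)^2 / pd2 (pd2 u) t x z)
        + μZ * z * pd3 u t x z - ((1-lam)*η*z + lam * F t) * pd2 u t x z
        = ρ * u t x z := by
  intro t x z hO
  obtain ⟨ht0, htT, hx, hz⟩ := hOsub hO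
  -- every point of O has strictly positive time coordinate
  have hOpos : ∀ ta xa za : ℝ, (ta, xa, za) ∈ O → 0 < ta := by
    intro ta xa za hOa
    by_contra hle
    push_neg at hle
    have hta0 : ta = 0 := le_antisymm hle (hOsub hOa).1
    obtain ⟨ε, hε, hb⟩ := Metric.isOpen_iff.1 hOopen _ hOa
    have hmem : ((ta - ε/2, xa, za) : ℝ × ℝ × ℝ) ∈ Metric.ball (ta, xa, za) ε := by
      rw [Metric.mem_ball, Prod.dist_eq, Prod.dist_eq]
      simp only [Real.dist_eq]
      have h1 : |ta - ε/2 - ta| = ε/2 := by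
        rw [show ta - ε/2 - ta = -(ε/2) by ring, abs_neg, abs_of_nonneg (by linarith)]
      rw [h1]
      simp only [sub_self, abs_zero, max_self]
      rw [max_eq_left (by linarith : (0:ℝ) ≤ ε/2)]
      linarith
    have := (hOsub (hb hmem)).1
    simp only at this
    linarith
  have htpos : 0 < t := hOpos t x z hO
  obtain ⟨hy1, hy2⟩ := hysrange t x z hO
  -- the closed-in-time domain is a neighborhood of interior points
  have hbig : ∀ ta ya za : ℝ, 0 < ta → ta < T → 0 < ya → ya < 1 → 0 < za →
      (Set.Ico 0 T ×ˢ Set.Ioo 0 1 ×ˢ Set.Ioi 0 : Set (ℝ × ℝ × ℝ)) ∈ 𝓝 (ta, ya, za) := by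
    intro ta ya za h1 h2 h3 h4 h5
    refine Filter.mem_of_superset
      ((isOpen_Ioo.prod (isOpen_Ioo.prod isOpen_Ioi)).mem_nhds ⟨⟨h1, h2⟩, ⟨h3, h4⟩, h5⟩) ?_
    rintro ⟨a, b, c⟩ ⟨ha, hb, hc⟩
    exact ⟨⟨ha.1.le, ha.2⟩, hb, hc⟩
  have hcont3 : ∀ G : ℝ → ℝ → ℝ → ℝ, ContinuousOn (fun p : ℝ × ℝ × ℝ => G p.1 p.2.1 p.2.2)
      (Set.Ico 0 T ×ˢ Set.Ioo 0 1 ×ˢ Set.Ioi 0) → ∀ ta ya za : ℝ, 0 < ta → ta < T → 0 < ya →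
      ya < 1 → 0 < za → ContinuousAt (fun q : ℝ × ℝ × ℝ => G q.1 q.2.1 q.2.2) (ta, ya, za) := by
    intro G hG ta ya za h1 h2 h3 h4 h5
    exact hG.continuousAt (hbig ta ya za h1 h2 h3 h4 h5)
  -- x-derivative of u at every point of O
  have hux : ∀ ta xa za : ℝ, (ta, xa, za) ∈ O →
      HasDerivAt (fun x' => u ta x' za) (ystar ta xa za) xa := by
    intro ta xa za hOa
    obtain ⟨hta0, htaT, hxa, hza⟩ := hOsub hOa
    obtain ⟨hya1, hya2⟩ := hysrange ta xa za hOa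
    have h1 : HasDerivAt (fun x' => uhat ta (ystar ta x' za) za)
        (uy ta (ystar ta xa za) za * ysx ta xa za) xa :=
      by have := (huy ta (ystar ta xa za) za hta0 htaT hya1 hya2 hza).comp xa (hysx ta xa za hOa); exact this
    have h2 : HasDerivAt (fun x' => x' * ystar ta x' za)
        (1 * ystar ta xa za + xa * ysx ta xa za) xa :=
      (hasDerivAt_id xa).mul (hysx ta xa za hOa)
    have heq : (fun x' => u ta x' za)
        = fun x' => uhat ta (ystar ta x' za) za + x' * ystar ta x' za :=
      funext fun x' => hu ta x' za
    have hval : uy ta (ystar ta xa za) za * ysx ta xa za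
        + (1 * ystar ta xa za + xa * ysx ta xa za) = ystar ta xa za := by
      rw [hfoc ta xa za hOa]; ring
    rw [heq]
    exact hval ▸ (h1.add h2)
  have hpd2 : ∀ ta xa za : ℝ, (ta, xa, za) ∈ O → pd2 u ta xa za = ystar ta xa za :=
    fun ta xa za hOa => (hux ta xa za hOa).deriv
  -- z-derivative of u at every point of O
  have huzO : ∀ ta xa za : ℝ, (ta, xa, za) ∈ O →
      HasDerivAt (fun z' => u ta xa z') (uz ta (ystar ta xa za) za) za := by
    intro ta xa za hOa
    obtain ⟨hta0, htaT, hxa, hza⟩ := hOsub hOa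
    obtain ⟨hya1, hya2⟩ := hysrange ta xa za hOa
    have htap : 0 < ta := hOpos ta xa za hOa
    have h1 : HasDerivAt (fun z' => uhat ta (ystar ta xa z') z')
        (uz ta (ystar ta xa za) za + uy ta (ystar ta xa za) za * ysz ta xa za) za := by
      refine comp_hasDerivAt_partial (fun s w => uhat ta w s) (fun s w => uz ta w s)
        (fun z' => ystar ta xa z') za (ystar ta xa za) (uy ta (ystar ta xa za) za)
        (ysz ta xa za) ((Set.Ioi 0) ×ˢ (Set.Ioo 0 1)) ?_ ?_ ?_ ?_ (hysz ta xa za hOa) rfl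
      · exact (isOpen_Ioi.prod isOpen_Ioo).mem_nhds ⟨hza, hya1, hya2⟩
      · rintro ⟨s, w⟩ ⟨hs, hw1, hw2⟩
        exact huz ta w s hta0 htaT hw1 hw2 hs
      · exact ContinuousAt.comp (x := (za, ystar ta xa za)) (f := fun p : ℝ × ℝ => ((ta, p.2, p.1) : ℝ × ℝ × ℝ))
          (hcont3 uz huzc ta (ystar ta xa za) za htap htaT hya1 hya2 hza) (by fun_prop)
      · exact huy ta (ystar ta xa za) za hta0 htaT hya1 hya2 hza
    have h2 : HasDerivAt (fun z' => xa * ystar ta xa z') (xa * ysz ta xa za) za :=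
      (hysz ta xa za hOa).const_mul xa
    have heq : (fun z' => u ta xa z')
        = fun z' => uhat ta (ystar ta xa z') z' + xa * ystar ta xa z' :=
      funext fun z' => hu ta xa z'
    have hval : uz ta (ystar ta xa za) za + uy ta (ystar ta xa za) za * ysz ta xa za
        + xa * ysz ta xa za = uz ta (ystar ta xa za) za := by
      rw [hfoc ta xa za hOa]; ring
    rw [heq]
    exact hval ▸ (h1.add h2)
  have hpd3 : ∀ ta xa za : ℝ, (ta, xa, za) ∈ O →
      pd3 u ta xa za = uz ta (ystar ta xa za) za :=
    fun ta xa za hOa => (huzO ta xa za hOa).deriv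
  -- slice neighborhoods
  have hOx : {x' : ℝ | (t, x', z) ∈ O} ∈ 𝓝 x := by
    have : IsOpen {x' : ℝ | (t, x', z) ∈ O} :=
      hOopen.preimage (continuous_const.prodMk (continuous_id.prodMk continuous_const))
    exact this.mem_nhds hO
  have hOz : {z' : ℝ | (t, x, z') ∈ O} ∈ 𝓝 z := by
    have : IsOpen {z' : ℝ | (t, x, z') ∈ O} :=
      hOopen.preimage (continuous_const.prodMk (continuous_const.prodMk continuous_id))
    exact this.mem_nhds hO
  have hApos : 0 < uyy t (ystar t x z) z := huyypos t (ystar t x z) z ht0 htT hy1 hy2 hz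
  have hAne : uyy t (ystar t x z) z ≠ 0 := hApos.ne'
  -- ysx = -1 / uyy
  have hcompx : HasDerivAt (fun x' => uy t (ystar t x' z) z)
      (uyy t (ystar t x z) z * ysx t x z) x :=
    by have := (huyy t (ystar t x z) z ht0 htT hy1 hy2 hz).comp x (hysx t x z hO); exact this
  have hevx : (fun x' => uy t (ystar t x' z) z) =ᶠ[𝓝 x] fun x' => -x' := by
    filter_upwards [hOx] with x' hx'
    exact hfoc t x' z hx'
  have hysx_val : uyy t (ystar t x z) z * ysx t x z = -1 :=
    (hevx.hasDerivAt_iff.1 hcompx).unique (by exact hasDerivAt_neg x)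
  have hysx_eq : ysx t x z = -1 / uyy t (ystar t x z) z := by
    rw [eq_div_iff hAne]
    linear_combination hysx_val
  -- ysz = -uyz / uyy
  have hcompz : HasDerivAt (fun z' => uy t (ystar t x z') z')
      (uyz t (ystar t x z) z + uyy t (ystar t x z) z * ysz t x z) z := by
    refine comp_hasDerivAt_partial (fun s w => uy t w s) (fun s w => uyz t w s)
      (fun z' => ystar t x z') z (ystar t x z) (uyy t (ystar t x z) z)
      (ysz t x z) ((Set.Ioi 0) ×ˢ (Set.Ioo 0 1)) ?_ ?_ ?_ ?_ (hysz t x z hO) rfl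
    · exact (isOpen_Ioi.prod isOpen_Ioo).mem_nhds ⟨hz, hy1, hy2⟩
    · rintro ⟨s, w⟩ ⟨hs, hw1, hw2⟩
      exact huyz t w s ht0 htT hw1 hw2 hs
    · exact ContinuousAt.comp (x := (z, ystar t x z)) (f := fun p : ℝ × ℝ => ((t, p.2, p.1) : ℝ × ℝ × ℝ))
        (hcont3 uyz huyzc t (ystar t x z) z htpos htT hy1 hy2 hz) (by fun_prop)
    · exact huyy t (ystar t x z) z ht0 htT hy1 hy2 hz
  have hevz : (fun z' => uy t (ystar t x z') z') =ᶠ[𝓝 z] fun _ => -x := by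
    filter_upwards [hOz] with z' hz'
    exact hfoc t x z' hz'
  have hysz_val : uyz t (ystar t x z) z + uyy t (ystar t x z) z * ysz t x z = 0 :=
    (hevz.hasDerivAt_iff.1 hcompz).unique (hasDerivAt_const z (-x))
  have hysz_eq : ysz t x z = -uyz t (ystar t x z) z / uyy t (ystar t x z) z := by
    rw [eq_div_iff hAne]
    linear_combination hysz_val
  -- Schwarz: w ↦ uz t w z has derivative uyz t y₀ z at y₀
  have hschwarz : HasDerivAt (fun w => uz t w z) (uyz t (ystar t x z) z) (ystar t x z) := by
    set y₀ := ystar t x z with hy₀def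
    set δ := min (min y₀ (1 - y₀)) z / 2 with hδdef
    have hδpos : 0 < δ := by
      have h1 : 0 < min (min y₀ (1 - y₀)) z := lt_min (lt_min hy1 (by linarith)) hz
      rw [hδdef]; linarith
    have hδy : δ ≤ y₀ / 2 := by
      have := (min_le_left (min y₀ (1 - y₀)) z).trans (min_le_left y₀ (1 - y₀))
      rw [hδdef]; linarith
    have hδy' : δ ≤ (1 - y₀) / 2 := by
      have := (min_le_left (min y₀ (1 - y₀)) z).trans (min_le_right y₀ (1 - y₀))
      rw [hδdef]; linarith
    have hδz : δ ≤ z / 2 := by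
      have := min_le_right (min y₀ (1 - y₀)) z
      rw [hδdef]; linarith
    have hwb : ∀ w : ℝ, |w - y₀| ≤ δ → 0 < w ∧ w < 1 := by
      intro w hw
      rw [abs_sub_le_iff] at hw
      constructor <;> linarith [hw.1, hw.2]
    have hzb : ∀ s : ℝ, |s - z| ≤ δ → 0 < s := by
      intro s hs
      rw [abs_sub_le_iff] at hs
      linarith [hs.1, hs.2]
    have hmapsTo : Set.MapsTo (fun p : ℝ × ℝ => ((t, p) : ℝ × ℝ × ℝ))
        (Icc (y₀ - δ) (y₀ + δ) ×ˢ Icc (z - δ) (z + δ))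
        (Set.Ico 0 T ×ˢ Set.Ioo 0 1 ×ˢ Set.Ioi 0) := by
      rintro ⟨w, s⟩ ⟨hw, hs⟩
      rw [mem_Icc] at hw hs
      have h1 := hwb w (by rw [abs_sub_le_iff]; constructor <;> linarith [hw.1, hw.2])
      have h2 := hzb s (by rw [abs_sub_le_iff]; constructor <;> linarith [hs.1, hs.2])
      exact ⟨⟨ht0, htT⟩, h1, h2⟩
    refine schwarz_point (fun w s => uhat t w s) (fun w s => uy t w s)
      (fun w s => uz t w s) (fun w s => uyz t w s) y₀ z δ hδpos ?_ ?_ ?_ ?_ ?_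
    · intro w s hw hs
      exact huy t w s ht0 htT (hwb w hw).1 (hwb w hw).2 (hzb s hs)
    · intro w s hw hs
      exact huz t w s ht0 htT (hwb w hw).1 (hwb w hw).2 (hzb s hs)
    · intro w s hw hs
      exact huyz t w s ht0 htT (hwb w hw).1 (hwb w hw).2 (hzb s hs)
    · exact huyc.comp ((continuous_const.prodMk continuous_id).continuousOn) hmapsTo
    · exact huyzc.comp ((continuous_const.prodMk continuous_id).continuousOn) hmapsTo
  -- second derivative in z of u
  have hcompzz : HasDerivAt (fun z' => uz t (ystar t x z') z')
      (uzz t (ystar t x z) z + uyz t (ystar t x z) z * ysz t x z) z := by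
    refine comp_hasDerivAt_partial (fun s w => uz t w s) (fun s w => uzz t w s)
      (fun z' => ystar t x z') z (ystar t x z) (uyz t (ystar t x z) z)
      (ysz t x z) ((Set.Ioi 0) ×ˢ (Set.Ioo 0 1)) ?_ ?_ ?_ ?_ (hysz t x z hO) rfl
    · exact (isOpen_Ioi.prod isOpen_Ioo).mem_nhds ⟨hz, hy1, hy2⟩
    · rintro ⟨s, w⟩ ⟨hs, hw1, hw2⟩
      exact huzz t w s ht0 htT hw1 hw2 hs
    · exact ContinuousAt.comp (x := (z, ystar t x z)) (f := fun p : ℝ × ℝ => ((t, p.2, p.1) : ℝ × ℝ × ℝ))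
        (hcont3 uzz huzzc t (ystar t x z) z htpos htT hy1 hy2 hz) (by fun_prop)
    · exact hschwarz
  -- t-derivative of u at the point
  have hutu : HasDerivAt (fun t' => u t' x z) (ut t (ystar t x z) z) t := by
    have h1 : HasDerivAt (fun t' => uhat t' (ystar t' x z) z)
        (ut t (ystar t x z) z + uy t (ystar t x z) z * yst t x z) t := by
      refine comp_hasDerivAt_partial (fun s w => uhat s w z) (fun s w => ut s w z)
        (fun t' => ystar t' x z) t (ystar t x z) (uy t (ystar t x z) z)
        (yst t x z) ((Set.Ioo 0 T) ×ˢ (Set.Ioo 0 1)) ?_ ?_ ?_ ?_ (hyst t x z hO) rfl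
      · exact (isOpen_Ioo.prod isOpen_Ioo).mem_nhds ⟨⟨htpos, htT⟩, hy1, hy2⟩
      · rintro ⟨s, w⟩ ⟨⟨hs1, hs2⟩, hw1, hw2⟩
        exact hut s w z hs1.le hs2 hw1 hw2 hz
      · exact ContinuousAt.comp (x := (t, ystar t x z)) (f := fun p : ℝ × ℝ => ((p.1, p.2, z) : ℝ × ℝ × ℝ))
          (hcont3 ut hutc t (ystar t x z) z htpos htT hy1 hy2 hz) (by fun_prop)
      · exact huy t (ystar t x z) z ht0 htT hy1 hy2 hz
    have h2 : HasDerivAt (fun t' => x * ystar t' x z) (x * yst t x z) t :=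
      (hyst t x z hO).const_mul x
    have heq : (fun t' => u t' x z)
        = fun t' => uhat t' (ystar t' x z) z + x * ystar t' x z :=
      funext fun t' => hu t' x z
    have hval : ut t (ystar t x z) z + uy t (ystar t x z) z * yst t x z
        + x * yst t x z = ut t (ystar t x z) z := by
      rw [hfoc t x z hO]; ring
    rw [heq]
    exact hval ▸ (h1.add h2)
  -- pd values at the point
  have e1 : pd1 u t x z = ut t (ystar t x z) z := hutu.deriv
  have e2 : pd2 u t x z = ystar t x z := hpd2 t x z hO
  have e3 : pd3 u t x z = uz t (ystar t x z) z := hpd3 t x z hO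
  have e22 : pd2 (pd2 u) t x z = ysx t x z := by
    have hev : (fun x' => pd2 u t x' z) =ᶠ[𝓝 x] fun x' => ystar t x' z := by
      filter_upwards [hOx] with x' hx'
      exact hpd2 t x' z hx'
    show deriv (fun x' => pd2 u t x' z) x = ysx t x z
    rw [hev.deriv_eq]
    exact (hysx t x z hO).deriv
  have e32 : pd3 (pd2 u) t x z = ysz t x z := by
    have hev : (fun z' => pd2 u t x z') =ᶠ[𝓝 z] fun z' => ystar t x z' := by
      filter_upwards [hOz] with z' hz'
      exact hpd2 t x z' hz'
    show deriv (fun z' => pd2 u t x z') z = ysz t x z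
    rw [hev.deriv_eq]
    exact (hysz t x z hO).deriv
  have e33 : pd3 (pd3 u) t x z
      = uzz t (ystar t x z) z + uyz t (ystar t x z) z * ysz t x z := by
    have hev : (fun z' => pd3 u t x z') =ᶠ[𝓝 z] fun z' => uz t (ystar t x z') z' := by
      filter_upwards [hOz] with z' hz'
      exact hpd3 t x z' hz'
    show deriv (fun z' => pd3 u t x z') z = _
    rw [hev.deriv_eq]
    exact hcompzz.deriv
  refine ⟨e2, ?_, ?_, ?_⟩
  · rw [e22, hysx_eq]
  · rw [e22, hysx_eq]
    exact div_neg_of_neg_of_pos (by norm_num) hApos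
  · have hd := hdual t (ystar t x z) z ht0 htT hy1 hy2 hz
    have hf := hfoc t x z hO
    rw [e1, e2, e3, e22, e32, e33, hysx_eq, hysz_eq, hu t x z]
    have hσne : σ ≠ 0 := hσ.ne'
    set A := uyy t (ystar t x z) z with hAdef
    set B := uyz t (ystar t x z) z with hBdef
    have h2 : (-B/A) / (-1/A) = B := by field_simp
    have h3 : (μ^2/(2*σ^2)) * (ystar t x z)^2 / (-1/A)
        = -((μ^2/(2*σ^2)) * (ystar t x z)^2 * A) := by field_simp
    have h4 : (uzz t (ystar t x z) z + B * (-B/A)) - (-B/A)^2 / (-1/A)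
        = uzz t (ystar t x z) z := by field_simp; ring
    rw [h4, h3]
    rw [show (μ*σZ*z/σ) * (ystar t x z) * (-B/A) / (-1/A)
      = (μ*σZ*z/σ) * (ystar t x z) * ((-B/A) / (-1/A)) by ring, h2]
    rw [hf] at hd
    linear_combination hd
end

section
/- Let μ, σ, ρ > 0, let 0 ≤ t < T, and let f : [0,T] → ℝ be continuous with f(s) ≥ 0 for all s ∈ [0,T]. Then lim_{r→∞} ∫_t^T ∫_{−∞}^r e^{−ρs + x} φ(s−t, x, r) f(s) dx ds = 0. -/
open MeasureTheory Set Filter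

/-- The density-type kernel `φ(s,x,y)` from the paper, with `μ̃ = μ/(2σ) − σρ/μ` and
`σ̃ = −μ/σ`. -/
noncomputable def phi (μ σ ρ : ℝ) (s x y : ℝ) : ℝ :=
  (2 * (2*y - x)) / ((-(μ/σ))^2 * Real.sqrt (2 * (-(μ/σ))^2 * Real.pi * s^3)) *
    Real.exp ((μ/(2*σ) - σ*ρ/μ) / (-(μ/σ)) * x - (1/2) * (μ/(2*σ) - σ*ρ/μ)^2 * s
      - (2*y - x)^2 / (2 * (-(μ/σ))^2 * s))

lemma gauss_tendsto (P r : ℝ) (hP : 0 < P) :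
    Tendsto (fun y : ℝ => -(4*P) * Real.exp (-(2*r+y)^2 / (8*P))) atTop (nhds 0) := by
  have t1 : Tendsto (fun y : ℝ => 2*r + y) atTop atTop :=
    tendsto_atTop_add_const_left _ _ tendsto_id
  have t2 : Tendsto (fun z : ℝ => -z^2 / (8*P)) atTop atBot := by
    have ha : Tendsto (fun z : ℝ => z^2) atTop atTop := tendsto_pow_atTop two_ne_zero
    have hb : Tendsto (fun z : ℝ => -z^2) atTop atBot := by
      simpa [Function.comp] using tendsto_neg_atTop_atBot.comp ha
    exact hb.atBot_div_const (by positivity)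
  have t4 : Tendsto (fun y : ℝ => -(2*r+y)^2 / (8*P)) atTop atBot := by
    have := t2.comp t1
    exact this
  have t3 : Tendsto (fun y : ℝ => Real.exp (-(2*r+y)^2 / (8*P))) atTop (nhds 0) :=
    Real.tendsto_exp_atBot.comp t4
  simpa using t3.const_mul (-(4*P))

lemma gauss_deriv (P r : ℝ) (hP : 0 < P) (y : ℝ) :
    HasDerivAt (fun y : ℝ => -(4*P) * Real.exp (-(2*r+y)^2 / (8*P)))
      ((2*r+y) * Real.exp (-(2*r+y)^2 / (8*P))) y := by
  have h1 : HasDerivAt (fun y : ℝ => 2*r + y) 1 y := (hasDerivAt_id y).const_add (2*r)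
  have h2 : HasDerivAt (fun y : ℝ => -(2*r+y)^2 / (8*P))
      (-(2*(2*r+y)^1*1) / (8*P)) y := ((h1.pow 2).neg).div_const _
  have h3 := (h2.exp).const_mul (-(4*P))
  refine h3.congr_deriv ?_
  field_simp
  ring

lemma gauss_Iio (P r : ℝ) (hP : 0 < P) (hr : 0 ≤ r) :
    IntegrableOn (fun x => (2*r - x) * Real.exp (-(2*r - x)^2 / (8*P))) (Set.Iio r) ∧
    ∫ x in Set.Iio r, (2*r - x) * Real.exp (-(2*r - x)^2 / (8*P))
      = 4*P * Real.exp (-r^2/(8*P)) := by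
  set H : ℝ → ℝ := fun y => (2*r + y) * Real.exp (-(2*r+y)^2 / (8*P)) with hH
  have hpos : ∀ y ∈ Ioi (-r), 0 ≤ H y := by
    intro y hy
    have : (0:ℝ) ≤ 2*r + y := by simp only [mem_Ioi] at hy; linarith
    positivity
  have hderiv : ∀ y, HasDerivAt (fun y : ℝ => -(4*P) * Real.exp (-(2*r+y)^2 / (8*P))) (H y) y :=
    gauss_deriv P r hP
  have hint : IntegrableOn H (Ioi (-r)) :=
    integrableOn_Ioi_deriv_of_nonneg (hderiv (-r)).continuousAt.continuousWithinAt
      (fun y _ => hderiv y) hpos (gauss_tendsto P r hP)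
  have hval : ∫ y in Ioi (-r), H y = 0 - (-(4*P) * Real.exp (-(2*r+(-r))^2 / (8*P))) :=
    integral_Ioi_of_hasDerivAt_of_tendsto' (fun y _ => hderiv y) hint (gauss_tendsto P r hP)
  have hfun : (fun x : ℝ => (2*r - x) * Real.exp (-(2*r - x)^2 / (8*P))) = fun x => H (-x) := by
    funext x
    simp [hH, sub_eq_add_neg]
  constructor
  · rw [hfun]
    have := (MeasurePreserving.integrableOn_comp_preimage (Measure.measurePreserving_neg
      (volume : Measure ℝ)) (Homeomorph.neg ℝ).measurableEmbedding).2 hint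
    have hset : (fun x : ℝ => -x) ⁻¹' Ioi (-r) = Iio r := by
      ext x; simp
    simpa [hset, Function.comp_def] using this
  · rw [hfun, ← integral_Iic_eq_integral_Iio, integral_comp_neg_Iic, hval]
    have : 2*r + -r = r := by ring
    rw [this]
    ring

lemma exp_quad_bound (β P Q r x : ℝ) (hP : 0 < P) (hPQ : P ≤ Q) (hr : 0 ≤ r) (hx : x ≤ r) :
    β*x - (2*r-x)^2/(2*P) ≤ 2*β*r + β^2*Q - r^2/(8*P) - (2*r-x)^2/(8*P) := by
  rw [← sub_nonneg]
  have key : 2*β*r + β^2*Q - r^2/(8*P) - (2*r-x)^2/(8*P) - (β*x - (2*r-x)^2/(2*P))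
      = β^2*(Q-P) + ((2*r-x) + 2*β*P)^2/(4*P) + ((2*r-x)^2 - r^2)/(8*P) := by
    field_simp
    ring
  rw [key]
  have h1 : r^2 ≤ (2*r-x)^2 := by
    have : r ≤ 2*r - x := by linarith
    nlinarith [this]
  have h2 : 0 ≤ β^2*(Q-P) := mul_nonneg (sq_nonneg β) (by linarith)
  have h3 : 0 ≤ ((2*r-x) + 2*β*P)^2/(4*P) := by positivity
  have h4 : 0 ≤ ((2*r-x)^2 - r^2)/(8*P) := div_nonneg (by linarith) (by positivity)
  linarith

set_option maxHeartbeats 1000000 in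
/-- The vanishing limit
`lim_{r→∞} ∫_t^T ∫_{−∞}^r e^{−ρs+x} φ(s−t,x,r) f(s) dx ds = 0`. -/
theorem stmt_7 (μ σ ρ t T : ℝ) (hμ : 0 < μ) (hσ : 0 < σ) (hρ : 0 < ρ)
    (ht : 0 ≤ t) (htT : t < T) (f : ℝ → ℝ)
    (hf : ContinuousOn f (Set.Icc 0 T))
    (hfnonneg : ∀ s ∈ Set.Icc (0:ℝ) T, 0 ≤ f s) :
    Filter.Tendsto
      (fun r : ℝ => ∫ s in t..T, ∫ x in Set.Iio r,
        Real.exp (-ρ*s + x) * phi μ σ ρ (s-t) x r * f s)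
      Filter.atTop (nhds 0) := by
  have hT' : 0 < T - t := sub_pos.mpr htT
  have h0T : (0:ℝ) ≤ T := le_trans ht htT.le
  obtain ⟨a, ha_def⟩ : ∃ x : ℝ, x = (-(μ/σ))^2 := ⟨_, rfl⟩
  have ha : 0 < a := by rw [ha_def, neg_sq]; positivity
  obtain ⟨m, hm_def⟩ : ∃ x : ℝ, x = μ/(2*σ) - σ*ρ/μ := ⟨_, rfl⟩
  obtain ⟨b, hb_def⟩ : ∃ x : ℝ, x = m / (-(μ/σ)) := ⟨_, rfl⟩
  obtain ⟨β, hβ_def⟩ : ∃ x : ℝ, x = 1 + b := ⟨_, rfl⟩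
  obtain ⟨Q, hQ_def⟩ : ∃ x : ℝ, x = a * (T - t) := ⟨_, rfl⟩
  have hQ : 0 < Q := by rw [hQ_def]; exact mul_pos ha hT'
  obtain ⟨s₀, hs₀mem, hs₀max⟩ := isCompact_Icc.exists_isMaxOn (Set.nonempty_Icc.mpr h0T) hf
  obtain ⟨Mf, hMf_def⟩ : ∃ x : ℝ, x = f s₀ := ⟨_, rfl⟩
  have hMf0 : 0 ≤ Mf := by rw [hMf_def]; exact hfnonneg s₀ hs₀mem
  have hMfle : ∀ s ∈ Set.Icc (0:ℝ) T, f s ≤ Mf := by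
    intro s hs; rw [hMf_def]; exact hs₀max hs
  obtain ⟨W, hW_def⟩ : ∃ x : ℝ, x = Real.sqrt (2*a*Real.pi) := ⟨_, rfl⟩
  have hW : 0 < W := by
    rw [hW_def]
    exact Real.sqrt_pos.mpr (mul_pos (mul_pos two_pos ha) Real.pi_pos)
  obtain ⟨M, hM_def⟩ : ∃ x : ℝ, x = 64 * Mf * a * Real.sqrt (T - t) / W * Real.exp (β^2*Q) := ⟨_, rfl⟩
  have hM0 : 0 ≤ M := by
    rw [hM_def]
    exact mul_nonneg (div_nonneg (mul_nonneg (mul_nonneg (mul_nonneg (by norm_num) hMf0)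
      ha.le) (Real.sqrt_nonneg _)) hW.le) (Real.exp_pos _).le
  rw [tendsto_zero_iff_norm_tendsto_zero]
  have key : ∀ r : ℝ, 1 ≤ r → 8*Q*(2*β+1) ≤ r →
      ‖∫ s in t..T, ∫ x in Set.Iio r,
          Real.exp (-ρ*s + x) * phi μ σ ρ (s-t) x r * f s‖
        ≤ (T - t) * (M * Real.exp (-r)) := by
    intro r hr1 hr2
    have hr0 : (0:ℝ) < r := lt_of_lt_of_le one_pos hr1
    have hinner : ∀ s ∈ Set.Ioc t T,
        ‖∫ x in Set.Iio r, Real.exp (-ρ*s + x) * phi μ σ ρ (s-t) x r * f s‖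
          ≤ M * Real.exp (-r) := by
      intro s hs
      obtain ⟨hts, hsT⟩ := hs
      have hs' : 0 < s - t := sub_pos.mpr hts
      have hs'T : s - t ≤ T - t := by linarith
      have hsmem : s ∈ Set.Icc (0:ℝ) T := ⟨by linarith, hsT⟩
      have hfs : 0 ≤ f s := hfnonneg s hsmem
      obtain ⟨P, hP_def⟩ : ∃ x : ℝ, x = a * (s - t) := ⟨_, rfl⟩
      have hP : 0 < P := by rw [hP_def]; exact mul_pos ha hs'
      have hPQ : P ≤ Q := by
        rw [hP_def, hQ_def]
        exact mul_le_mul_of_nonneg_left hs'T ha.le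
      obtain ⟨S, hS_def⟩ : ∃ x : ℝ, x = Real.sqrt (2 * a * Real.pi * (s-t)^3) := ⟨_, rfl⟩
      have hS : 0 < S := by
        rw [hS_def]
        exact Real.sqrt_pos.mpr (mul_pos (mul_pos (mul_pos two_pos ha) Real.pi_pos)
          (pow_pos hs' 3))
      obtain ⟨K, hK_def⟩ : ∃ x : ℝ, x = Mf * (2/(a*S)) * Real.exp (2*β*r + β^2*Q - r^2/(8*P)) := ⟨_, rfl⟩
      have hK0 : 0 ≤ K := by
        rw [hK_def]
        exact mul_nonneg (mul_nonneg hMf0 (div_nonneg two_pos.le (mul_pos ha hS).le))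
          (Real.exp_pos _).le
      obtain ⟨hgint, hgval⟩ := gauss_Iio P r hP hr0.le
      have hphi_eq : ∀ x : ℝ, phi μ σ ρ (s-t) x r
          = (2*(2*r - x))/(a*S)
            * Real.exp (b*x - (1/2)*m^2*(s-t) - (2*r-x)^2/(2*P)) := by
        intro x
        simp only [phi]
        rw [← ha_def, ← hm_def, ← hb_def, ← hS_def,
          show (2:ℝ)*a*(s-t) = 2*P from by rw [hP_def]; ring]
      have hpt : ∀ x, x ∈ Set.Iio r →
          ‖Real.exp (-ρ*s + x) * phi μ σ ρ (s-t) x r * f s‖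
            ≤ K * ((2*r - x) * Real.exp (-(2*r - x)^2 / (8*P))) := by
        intro x hx
        rw [Set.mem_Iio] at hx
        have hz0 : (0:ℝ) < 2*r - x := by linarith
        have hexp_le : (-ρ*s + x) + (b*x - (1/2)*m^2*(s-t) - (2*r-x)^2/(2*P))
            ≤ (2*β*r + β^2*Q - r^2/(8*P)) + (-(2*r-x)^2/(8*P)) := by
          have hL2 := exp_quad_bound β P Q r x hP hPQ hr0.le hx.le
          have h1 : 0 ≤ ρ * s := mul_nonneg hρ.le (by linarith)
          have h2 : 0 ≤ (1/2)*m^2*(s-t) := by positivity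
          have h3 : β*x = x + b*x := by rw [hβ_def]; ring
          have h4 : -(2*r-x)^2/(8*P) = -((2*r-x)^2/(8*P)) := by ring
          linarith
        calc ‖Real.exp (-ρ*s + x) * phi μ σ ρ (s-t) x r * f s‖
            = Real.exp (-ρ*s + x)
              * ((2*(2*r - x))/(a*S)
                * Real.exp (b*x - (1/2)*m^2*(s-t) - (2*r-x)^2/(2*P))) * f s := by
              rw [hphi_eq x, Real.norm_eq_abs, abs_of_nonneg]
              exact mul_nonneg (mul_nonneg (Real.exp_pos _).le
                (mul_nonneg (div_nonneg (by linarith) (mul_pos ha hS).le)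
                  (Real.exp_pos _).le)) hfs
          _ = ((2*(2*r-x))/(a*S) * f s)
              * Real.exp ((-ρ*s + x) + (b*x - (1/2)*m^2*(s-t) - (2*r-x)^2/(2*P))) := by
              rw [Real.exp_add (-ρ*s + x) (b*x - (1/2)*m^2*(s-t) - (2*r-x)^2/(2*P))]; ring
          _ ≤ ((2*(2*r-x))/(a*S) * Mf)
              * Real.exp ((2*β*r + β^2*Q - r^2/(8*P)) + (-(2*r-x)^2/(8*P))) := by
              apply mul_le_mul _ (Real.exp_le_exp.mpr hexp_le) (Real.exp_pos _).le
              · exact mul_nonneg (div_nonneg (by linarith) (mul_pos ha hS).le) hMf0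
              · exact mul_le_mul_of_nonneg_left (hMfle s hsmem)
                  (div_nonneg (by linarith) (mul_pos ha hS).le)
          _ = K * ((2*r - x) * Real.exp (-(2*r - x)^2 / (8*P))) := by
              rw [hK_def, Real.exp_add]
              ring
      have hscalar : K * (4*P * Real.exp (-r^2/(8*P))) ≤ M * Real.exp (-r) := by
        have hexpP : Real.exp (-(1/(8*P))) ≤ 8*P := by
          rw [Real.exp_neg]
          have h8P : (0:ℝ) < 1/(8*P) := by rw [one_div]; exact inv_pos.mpr (by linarith)
          have h : 1/(8*P) ≤ Real.exp (1/(8*P)) := by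
            have := Real.add_one_le_exp (1/(8*P)); linarith
          calc (Real.exp (1/(8*P)))⁻¹ ≤ (1/(8*P))⁻¹ := by
                apply inv_anti₀ h8P h
            _ = 8*P := by rw [one_div, inv_inv]
        have hexp2 : (2*β*r + β^2*Q - r^2/(8*P)) + (-r^2/(8*P))
            ≤ β^2*Q + (-(1/(8*P))) + (-r) := by
          have e1 : 1/(8*P) ≤ r^2/(8*P) :=
            (div_le_div_iff_of_pos_right (show (0:ℝ) < 8*P by linarith)).mpr (by nlinarith [hr1])
          have e2 : r^2/(8*Q) ≤ r^2/(8*P) :=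
            div_le_div_of_nonneg_left (sq_nonneg r) (by linarith) (by linarith)
          have e3 : (2*β+1)*r ≤ r^2/(8*Q) := by
            rw [le_div_iff₀ (by linarith : (0:ℝ) < 8*Q)]
            linarith [mul_le_mul_of_nonneg_left hr2 hr0.le]
          have e4 : -r^2/(8*P) = -(r^2/(8*P)) := by ring
          linarith
        have hSW : S = W * ((s-t) * Real.sqrt (s-t)) := by
          rw [hS_def, hW_def,
            show 2*a*Real.pi*(s-t)^3 = (2*a*Real.pi) * ((s-t)*Real.sqrt (s-t))^2 from by
              rw [mul_pow, Real.sq_sqrt hs'.le]; ring,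
            Real.sqrt_mul (by positivity), Real.sqrt_sq (by positivity)]
        have hfac : Mf * (8*P/(a*S)) * (8*P) ≤ 64 * Mf * a * Real.sqrt (T - t) / W := by
          have h2 : Real.sqrt (s-t) * Real.sqrt (s-t) = s - t := Real.mul_self_sqrt hs'.le
          have h3 : Real.sqrt (s-t) ≤ Real.sqrt (T-t) := Real.sqrt_le_sqrt (by linarith)
          have h4 : Real.sqrt (s-t) * ((s-t) * Real.sqrt (s-t))
              ≤ Real.sqrt (T-t) * ((s-t) * Real.sqrt (s-t)) :=
            mul_le_mul_of_nonneg_right h3 (mul_nonneg hs'.le (Real.sqrt_nonneg _))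
          have h5 : (s-t)^2 ≤ Real.sqrt (T-t) * ((s-t) * Real.sqrt (s-t)) := by
            have e : (s-t)^2 = Real.sqrt (s-t) * ((s-t) * Real.sqrt (s-t)) := by
              linear_combination (-(s-t)) * h2
            rw [e]; exact h4
          have hgoal : 64*P^2/(a*S) ≤ 64 * a * Real.sqrt (T - t) / W := by
            rw [div_le_div_iff₀ (mul_pos ha hS) hW]
            calc 64*P^2*W = (64*a^2*W) * (s-t)^2 := by rw [hP_def]; ring
              _ ≤ (64*a^2*W) * (Real.sqrt (T-t) * ((s-t) * Real.sqrt (s-t))) :=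
                mul_le_mul_of_nonneg_left h5
                  (mul_nonneg (by positivity : (0:ℝ) ≤ 64*a^2) hW.le)
              _ = 64 * a * Real.sqrt (T - t) * (a*S) := by rw [hSW]; ring
          calc Mf * (8*P/(a*S)) * (8*P) = Mf * (64*P^2/(a*S)) := by ring
            _ ≤ Mf * (64 * a * Real.sqrt (T - t) / W) :=
              mul_le_mul_of_nonneg_left hgoal hMf0
            _ = 64 * Mf * a * Real.sqrt (T - t) / W := by ring
        calc K * (4*P * Real.exp (-r^2/(8*P)))
            = Mf * (8*P/(a*S))
              * Real.exp ((2*β*r + β^2*Q - r^2/(8*P)) + (-r^2/(8*P))) := by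
              rw [hK_def, Real.exp_add]; ring
          _ ≤ Mf * (8*P/(a*S)) * Real.exp (β^2*Q + (-(1/(8*P))) + (-r)) := by
              apply mul_le_mul_of_nonneg_left (Real.exp_le_exp.mpr hexp2)
              exact mul_nonneg hMf0 (div_nonneg (by linarith) (mul_pos ha hS).le)
          _ = (Mf * (8*P/(a*S)) * Real.exp (-(1/(8*P))))
              * (Real.exp (β^2*Q) * Real.exp (-r)) := by
              rw [Real.exp_add, Real.exp_add]; ring
          _ ≤ (Mf * (8*P/(a*S)) * (8*P)) * (Real.exp (β^2*Q) * Real.exp (-r)) := by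
              apply mul_le_mul_of_nonneg_right
                (mul_le_mul_of_nonneg_left hexpP
                  (mul_nonneg hMf0 (div_nonneg (by linarith) (mul_pos ha hS).le)))
                (by positivity)
          _ ≤ (64 * Mf * a * Real.sqrt (T - t) / W) * (Real.exp (β^2*Q) * Real.exp (-r)) :=
              mul_le_mul_of_nonneg_right hfac (by positivity)
          _ = M * Real.exp (-r) := by rw [hM_def]; ring
      calc ‖∫ x in Set.Iio r, Real.exp (-ρ*s + x) * phi μ σ ρ (s-t) x r * f s‖
          ≤ ∫ x in Set.Iio r, ‖Real.exp (-ρ*s + x) * phi μ σ ρ (s-t) x r * f s‖ :=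
            norm_integral_le_integral_norm _
        _ ≤ ∫ x in Set.Iio r, K * ((2*r - x) * Real.exp (-(2*r - x)^2 / (8*P))) := by
            refine integral_mono_of_nonneg (Filter.Eventually.of_forall fun x => norm_nonneg _)
              (hgint.const_mul K) ?_
            exact (ae_restrict_iff' measurableSet_Iio).mpr (Filter.Eventually.of_forall hpt)
        _ = K * (4*P * Real.exp (-r^2/(8*P))) := by rw [integral_const_mul, hgval]
        _ ≤ M * Real.exp (-r) := hscalar
    rw [intervalIntegral.integral_of_le htT.le]
    calc ‖∫ s in Set.Ioc t T, ∫ x in Set.Iio r,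
            Real.exp (-ρ*s + x) * phi μ σ ρ (s-t) x r * f s‖
        ≤ ∫ s in Set.Ioc t T, ‖∫ x in Set.Iio r,
            Real.exp (-ρ*s + x) * phi μ σ ρ (s-t) x r * f s‖ :=
          norm_integral_le_integral_norm _
      _ ≤ ∫ _s in Set.Ioc t T, M * Real.exp (-r) := by
          refine integral_mono_of_nonneg (Filter.Eventually.of_forall fun s => norm_nonneg _)
            (integrableOn_const measure_Ioc_lt_top.ne) ?_
          exact (ae_restrict_iff' measurableSet_Ioc).mpr (Filter.Eventually.of_forall hinner)
      _ = (T - t) * (M * Real.exp (-r)) := by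
          rw [setIntegral_const, Real.volume_real_Ioc_of_le htT.le, smul_eq_mul]
  have htend : Tendsto (fun r : ℝ => (T - t) * (M * Real.exp (-r))) atTop (nhds 0) := by
    have h1 : Tendsto (fun r : ℝ => Real.exp (-r)) atTop (nhds 0) :=
      Real.tendsto_exp_atBot.comp tendsto_neg_atTop_atBot
    have h2 := (h1.const_mul M).const_mul (T - t)
    simpa using h2
  refine squeeze_zero' (Filter.Eventually.of_forall fun r => norm_nonneg _) ?_ htend
  filter_upwards [Filter.eventually_ge_atTop (1:ℝ),
    Filter.eventually_ge_atTop (8*Q*(2*β+1))] with r hra hrb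
  exact key r hra hrb
end

section
/- Let μ, σ, σ_Z, μ_Z, ρ > 0, let 0 ≤ t < T, and set κ := μ_Z − σ_Z²/2 − μσ_Z/(2σ) + σσ_Z ρ/μ. Then lim_{r→∞} ∫_t^T ∫_{−∞}^r exp( −ρs + (1 − σσ_Z/μ)x + κ(s−t) ) φ(s−t, x, r) dx ds = 0. -/
set_option maxHeartbeats 1000000

private lemma zexp_le_one (z : ℝ) (hz : 0 ≤ z) : z * Real.exp (-z) ≤ 1 := by
  have hzexp : z ≤ Real.exp z := by linarith [Real.add_one_le_exp z]
  calc z * Real.exp (-z) ≤ Real.exp z * Real.exp (-z) :=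
        mul_le_mul_of_nonneg_right hzexp (Real.exp_pos _).le
    _ = 1 := by rw [← Real.exp_add]; simp

private lemma exp_quad (w : ℝ) (hw : 0 ≤ w) : w^2 ≤ 4 * Real.exp w := by
  have h1 := Real.add_one_le_exp (w/2)
  have h2 : Real.exp (w/2) * Real.exp (w/2) = Real.exp w := by
    rw [← Real.exp_add]; congr 1; ring
  nlinarith [Real.exp_pos (w/2)]

private lemma ptbound (c K A n κ ρ s q x z r : ℝ)
    (hc : 0 < c) (hK : 0 < K) (hn : 0 ≤ n) (hρ : 0 < ρ) (hs : 0 ≤ s)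
    (hq0 : 0 < q) (hqK : q ≤ K) (hx : x < r) (hz : z = 2*r - x)
    (hr1 : 1 ≤ r) (hr2 : 4*c*K*(|A - 1| + 1) ≤ r) :
    Real.exp (-ρ*s + A*x + κ*q - n*q - z^2/(2*c*q)) * (2*z) / (c * Real.sqrt (2*c*Real.pi*q^3))
      ≤ Real.exp (|κ| * K) * (512*c*Real.sqrt K / Real.sqrt (2*c*Real.pi)) *
          Real.exp ((2*A-2)*r - r^2/(8*c*K)) * Real.exp x := by
  have hπ := Real.pi_pos
  have hz0 : 0 < z := by rw [hz]; linarith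
  have hrz : r ≤ z := by rw [hz]; linarith
  -- exponent bound
  have hexp1 : -ρ*s + A*x + κ*q - n*q - z^2/(2*c*q)
      ≤ |κ| * K + A*x - r*z/(4*c*K) - r^2/(8*c*q) - r^2/(8*c*K) := by
    have h1 : -ρ*s ≤ 0 := by nlinarith
    have h2 : κ*q ≤ |κ| * K := by
      calc κ*q ≤ |κ| * q := mul_le_mul_of_nonneg_right (le_abs_self κ) hq0.le
        _ ≤ |κ| * K := mul_le_mul_of_nonneg_left hqK (abs_nonneg κ)
    have h3 : 0 ≤ n*q := mul_nonneg hn hq0.le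
    have h4 : r*z/(4*c*K) + r^2/(8*c*q) + r^2/(8*c*K) ≤ z^2/(2*c*q) := by
      have e1 : r*z/(4*c*K) + r^2/(8*c*q) + r^2/(8*c*K)
          = (2*r*z*q + r^2*K + r^2*q)/(8*c*q*K) := by
        field_simp; ring
      have e2 : z^2/(2*c*q) = (4*z^2*K)/(8*c*q*K) := by
        field_simp; ring
      rw [e1, e2]
      have t1 : r*z ≤ z*z := mul_le_mul_of_nonneg_right hrz hz0.le
      have t2 : z*z*q ≤ z*z*K := mul_le_mul_of_nonneg_left hqK (by nlinarith)
      have t3 : r*r ≤ z*z := mul_le_mul hrz hrz (by linarith) hz0.le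
      have ha : r*z*q ≤ z^2*K := by nlinarith [mul_le_mul_of_nonneg_right t1 hq0.le]
      have hb : r^2*K ≤ z^2*K := by nlinarith [mul_le_mul_of_nonneg_right t3 hK.le]
      have hcq : r^2*q ≤ z^2*K := by nlinarith [mul_le_mul_of_nonneg_right t3 hq0.le, mul_le_mul_of_nonneg_left hqK (mul_nonneg (by linarith : (0:ℝ) ≤ z) hz0.le)]
      gcongr
      linarith
    linarith
  -- x-bracket bound
  have hb1 : 2*z*Real.exp (A*x - r*z/(4*c*K)) ≤ 2*Real.exp (x + (2*A-2)*r) := by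
    have h4cK : (0:ℝ) < 4*c*K := by positivity
    have hlam : 1 ≤ (A-1) + r/(4*c*K) := by
      have h' : |A - 1| + 1 ≤ r/(4*c*K) := by
        rw [le_div_iff₀ h4cK]; nlinarith [hr2]
      have := neg_abs_le (A - 1)
      linarith
    have harg : A*x - r*z/(4*c*K) = x + (2*A-2)*r - ((A-1) + r/(4*c*K))*z := by
      rw [hz]; field_simp; ring
    have h5 : A*x - r*z/(4*c*K) ≤ x + (2*A-2)*r - z := by
      rw [harg]; nlinarith [hz0.le]
    calc 2*z*Real.exp (A*x - r*z/(4*c*K)) ≤ 2*z*Real.exp (x + (2*A-2)*r - z) :=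
          mul_le_mul_of_nonneg_left (Real.exp_le_exp.2 h5) (by linarith)
      _ = 2*Real.exp (x+(2*A-2)*r) * (z*Real.exp (-z)) := by
          rw [show x+(2*A-2)*r - z = (x+(2*A-2)*r) + (-z) from by ring, Real.exp_add]; ring
      _ ≤ 2*Real.exp (x+(2*A-2)*r) * 1 := by
          have hz1 := zexp_le_one z hz0.le
          have h0 : (0:ℝ) ≤ 2*Real.exp (x+(2*A-2)*r) := by positivity
          nlinarith
      _ = 2*Real.exp (x+(2*A-2)*r) := mul_one _
  -- s-bracket bound
  have hSQ : 0 < Real.sqrt (2*c*Real.pi) := Real.sqrt_pos.2 (by positivity)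
  have hb2 : Real.exp (-(r^2/(8*c*q))) / (c * Real.sqrt (2*c*Real.pi*q^3))
      ≤ 256*c*Real.sqrt K/Real.sqrt (2*c*Real.pi) := by
    have hsqq : 0 < Real.sqrt q := Real.sqrt_pos.2 hq0
    have hsq : Real.sqrt (2*c*Real.pi*q^3) = Real.sqrt (2*c*Real.pi) * (q*Real.sqrt q) := by
      rw [show 2*c*Real.pi*q^3 = (2*c*Real.pi)*(q^2*q) from by ring,
        Real.sqrt_mul (by positivity), Real.sqrt_mul (sq_nonneg q), Real.sqrt_sq hq0.le]
    have hexpb : Real.exp (-(r^2/(8*c*q))) ≤ 256*c^2*q^2 := by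
      have hw0 : 0 ≤ r^2/(8*c*q) := by positivity
      have hquad := exp_quad (r^2/(8*c*q)) hw0
      have hkey : 1 ≤ 256*c^2*q^2*Real.exp (r^2/(8*c*q)) := by
        have h64 : (0:ℝ) ≤ 64*c^2*q^2 := by positivity
        have hmul := mul_le_mul_of_nonneg_left hquad h64
        have hid : 64*c^2*q^2*(r^2/(8*c*q))^2 = r^4 := by field_simp; ring
        rw [hid] at hmul
        have hr4 : (1:ℝ) ≤ r^4 := by nlinarith [sq_nonneg (r-1), sq_nonneg (r^2-1), sq_nonneg r]
        nlinarith [hmul, hr4]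
      rw [Real.exp_neg]
      rw [show (Real.exp (r^2/(8*c*q)))⁻¹ = 1/Real.exp (r^2/(8*c*q)) from (one_div _).symm,
        div_le_iff₀ (Real.exp_pos _)]
      linarith
    calc Real.exp (-(r^2/(8*c*q))) / (c*Real.sqrt (2*c*Real.pi*q^3))
        ≤ 256*c^2*q^2 / (c*Real.sqrt (2*c*Real.pi*q^3)) := by gcongr
      _ = 256*c*Real.sqrt q/Real.sqrt (2*c*Real.pi) := by
          rw [hsq]
          have h1 : Real.sqrt q * Real.sqrt q = q := Real.mul_self_sqrt hq0.le
          rw [div_eq_div_iff (by positivity) (by positivity)]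
          linear_combination (-256*c^2*Real.sqrt (2*c*Real.pi)*q) * h1
      _ ≤ 256*c*Real.sqrt K/Real.sqrt (2*c*Real.pi) := by
          gcongr
  -- assemble
  calc Real.exp (-ρ*s + A*x + κ*q - n*q - z^2/(2*c*q)) * (2*z) / (c*Real.sqrt (2*c*Real.pi*q^3))
      ≤ Real.exp (|κ| * K + A*x - r*z/(4*c*K) - r^2/(8*c*q) - r^2/(8*c*K)) * (2*z)
          / (c*Real.sqrt (2*c*Real.pi*q^3)) := by
        gcongr
    _ = Real.exp (|κ| * K) * Real.exp (-(r^2/(8*c*K)))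
          * (Real.exp (-(r^2/(8*c*q))) / (c*Real.sqrt (2*c*Real.pi*q^3)))
          * (2*z*Real.exp (A*x - r*z/(4*c*K))) := by
        rw [show |κ| * K + A*x - r*z/(4*c*K) - r^2/(8*c*q) - r^2/(8*c*K)
            = |κ| * K + -(r^2/(8*c*K)) + -(r^2/(8*c*q)) + (A*x - r*z/(4*c*K)) from by ring,
          Real.exp_add, Real.exp_add, Real.exp_add]
        ring
    _ ≤ Real.exp (|κ| * K) * Real.exp (-(r^2/(8*c*K)))
          * (256*c*Real.sqrt K/Real.sqrt (2*c*Real.pi)) * (2*Real.exp (x+(2*A-2)*r)) := by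
        apply mul_le_mul _ hb1 _ _
        · exact mul_le_mul_of_nonneg_left hb2 (by positivity)
        · exact mul_nonneg (by linarith) (Real.exp_pos _).le
        · positivity
    _ = Real.exp (|κ| * K) * (512*c*Real.sqrt K / Real.sqrt (2*c*Real.pi))
          * Real.exp ((2*A-2)*r - r^2/(8*c*K)) * Real.exp x := by
        rw [Real.exp_add x ((2*A-2)*r),
          show (2*A-2)*r - r^2/(8*c*K) = (2*A-2)*r + -(r^2/(8*c*K)) from by ring,
          Real.exp_add]
        ring

/-- The vanishing limit
`lim_{r→∞} ∫_t^T ∫_{−∞}^r exp(−ρs + (1 − σσ_Z/μ)x + κ(s−t)) φ(s−t,x,r) dx ds = 0`,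
where `κ = μ_Z − σ_Z²/2 − μσ_Z/(2σ) + σσ_Zρ/μ`. -/
theorem stmt_8 (μ σ σZ μZ ρ t T κ : ℝ) (hμ : 0 < μ) (hσ : 0 < σ) (hσZ : 0 < σZ)
    (hμZ : 0 < μZ) (hρ : 0 < ρ) (ht : 0 ≤ t) (htT : t < T)
    (hκ : κ = μZ - σZ^2/2 - μ*σZ/(2*σ) + σ*σZ*ρ/μ) :
    Filter.Tendsto
      (fun r : ℝ => ∫ s in t..T, ∫ x in Set.Iio r,
        Real.exp (-ρ*s + (1 - σ*σZ/μ)*x + κ*(s-t)) * phi μ σ ρ (s-t) x r)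
      Filter.atTop (nhds 0) := by
  have hπ := Real.pi_pos
  have hc0 : 0 < (μ/σ)^2 := by positivity
  set c : ℝ := (μ/σ)^2 with hc_def
  have hc : 0 < c := hc0
  have hK0 : 0 < T - t := sub_pos.2 htT
  set K : ℝ := T - t with hK_def
  have hK : 0 < K := hK0
  set A : ℝ := (1 - σ*σZ/μ) + (μ/(2*σ) - σ*ρ/μ) / (-(μ/σ)) with hA_def
  set n : ℝ := (1/2) * (μ/(2*σ) - σ*ρ/μ)^2 with hn_def
  have hn : 0 ≤ n := by rw [hn_def]; positivity
  set C0 : ℝ := Real.exp (|κ| * K) * (512*c*Real.sqrt K / Real.sqrt (2*c*Real.pi)) with hC0_def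
  have hC0 : 0 ≤ C0 := by rw [hC0_def]; positivity
  -- limit of the dominating function
  have hGlim : Filter.Tendsto (fun r : ℝ => K*C0*Real.exp ((2*A-1)*r - r^2/(8*c*K)))
      Filter.atTop (nhds 0) := by
    have h1 : Filter.Tendsto (fun r : ℝ => (2*A-1)*r - r^2/(8*c*K))
        Filter.atTop Filter.atBot := by
      have heq : (fun r : ℝ => (2*A-1)*r - r^2/(8*c*K))
          = fun r : ℝ => r * ((2*A-1) + -(1/(8*c*K))*r) := by
        funext r; field_simp; ring
      rw [heq]
      apply Filter.Tendsto.atTop_mul_atBot₀ Filter.tendsto_id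
      apply Filter.tendsto_atBot_add_const_left
      exact Filter.Tendsto.const_mul_atTop_of_neg (neg_lt_zero.2 (by positivity)) Filter.tendsto_id
    have h2 := (Real.tendsto_exp_atBot.comp h1).const_mul (K*C0)
    simpa [Function.comp, mul_zero, mul_assoc] using h2
  apply tendsto_of_tendsto_of_tendsto_of_le_of_le' tendsto_const_nhds hGlim
  · -- eventual nonnegativity
    filter_upwards [Filter.eventually_ge_atTop (1:ℝ)] with r hr1
    apply intervalIntegral.integral_nonneg htT.le
    intro s _
    apply MeasureTheory.setIntegral_nonneg measurableSet_Iio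
    intro x hx
    have hx' : x < r := hx
    apply mul_nonneg (Real.exp_pos _).le
    unfold phi
    exact mul_nonneg (div_nonneg (by nlinarith) (by positivity)) (Real.exp_pos _).le
  · -- eventual upper bound
    filter_upwards [Filter.eventually_ge_atTop (max 1 (4*c*K*(|A - 1| + 1)))] with r hr
    have hr1 : (1:ℝ) ≤ r := le_trans (le_max_left _ _) hr
    have hr2 : 4*c*K*(|A - 1| + 1) ≤ r := le_trans (le_max_right _ _) hr
    have hf_nonneg : ∀ s x : ℝ, x ∈ Set.Iio r →
        0 ≤ Real.exp (-ρ*s + (1 - σ*σZ/μ)*x + κ*(s-t)) * phi μ σ ρ (s-t) x r := by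
      intro s x hx
      have hx' : x < r := hx
      apply mul_nonneg (Real.exp_pos _).le
      unfold phi
      exact mul_nonneg (div_nonneg (by nlinarith) (by positivity)) (Real.exp_pos _).le
    have hphi_eq : ∀ s q x : ℝ,
        Real.exp (-ρ*s + (1 - σ*σZ/μ)*x + κ*q) * phi μ σ ρ q x r
          = Real.exp (-ρ*s + A*x + κ*q - n*q - (2*r-x)^2/(2*c*q)) * (2*(2*r-x))
            / (c * Real.sqrt (2*c*Real.pi*q^3)) := by
      intro s q x
      unfold phi
      have hnegsq : (-(μ/σ))^2 = c := by rw [hc_def]; exact neg_sq _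
      rw [hnegsq]
      have hsplit : Real.exp (-ρ*s + A*x + κ*q - n*q - (2*r-x)^2/(2*c*q))
          = Real.exp (-ρ*s + (1 - σ*σZ/μ)*x + κ*q)
            * Real.exp ((μ/(2*σ) - σ*ρ/μ) / (-(μ/σ)) * x - (1/2) * (μ/(2*σ) - σ*ρ/μ)^2 * q
              - (2*r-x)^2/(2*c*q)) := by
        rw [← Real.exp_add]
        congr 1
        rw [hA_def, hn_def]; ring
      rw [hsplit]
      ring
    have key : ∀ s ∈ Set.Ioc t T, ∀ x ∈ Set.Iio r,
        Real.exp (-ρ*s + (1 - σ*σZ/μ)*x + κ*(s-t)) * phi μ σ ρ (s-t) x r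
          ≤ C0 * Real.exp ((2*A-2)*r - r^2/(8*c*K)) * Real.exp x := by
      intro s hs x hx
      rw [hphi_eq s (s-t) x, hC0_def]
      exact ptbound c K A n κ ρ s (s-t) x (2*r-x) r hc hK hn hρ (le_trans ht hs.1.le)
        (sub_pos.2 hs.1) (by rw [hK_def]; linarith [hs.2]) hx rfl hr1 hr2
    rw [intervalIntegral.integral_of_le htT.le]
    calc (∫ s in Set.Ioc t T, ∫ x in Set.Iio r,
            Real.exp (-ρ*s + (1 - σ*σZ/μ)*x + κ*(s-t)) * phi μ σ ρ (s-t) x r)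
        ≤ ∫ _s in Set.Ioc t T, (C0 * Real.exp ((2*A-2)*r - r^2/(8*c*K)) * Real.exp r) := by
          apply MeasureTheory.integral_mono_of_nonneg
          · exact Filter.Eventually.of_forall fun s =>
              MeasureTheory.setIntegral_nonneg measurableSet_Iio fun x hx => hf_nonneg s x hx
          · exact (MeasureTheory.integrableOn_const_iff).2 (Or.inr measure_Ioc_lt_top)
          · apply MeasureTheory.ae_restrict_of_forall_mem measurableSet_Ioc
            intro s hs
            calc (∫ x in Set.Iio r,
                    Real.exp (-ρ*s + (1 - σ*σZ/μ)*x + κ*(s-t)) * phi μ σ ρ (s-t) x r)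
                ≤ ∫ x in Set.Iio r,
                    (C0 * Real.exp ((2*A-2)*r - r^2/(8*c*K))) * Real.exp x := by
                  apply MeasureTheory.integral_mono_of_nonneg
                  · exact MeasureTheory.ae_restrict_of_forall_mem measurableSet_Iio
                      fun x hx => hf_nonneg s x hx
                  · exact ((integrableOn_exp_Iic r).mono_set Set.Iio_subset_Iic_self).const_mul _
                  · apply MeasureTheory.ae_restrict_of_forall_mem measurableSet_Iio
                    intro x hx
                    calc Real.exp (-ρ*s + (1 - σ*σZ/μ)*x + κ*(s-t)) * phi μ σ ρ (s-t) x r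
                        ≤ C0 * Real.exp ((2*A-2)*r - r^2/(8*c*K)) * Real.exp x := key s hs x hx
                      _ = (C0 * Real.exp ((2*A-2)*r - r^2/(8*c*K))) * Real.exp x := by ring
                _ = C0 * Real.exp ((2*A-2)*r - r^2/(8*c*K)) * Real.exp r := by
                    rw [MeasureTheory.integral_const_mul, ← MeasureTheory.integral_Iic_eq_integral_Iio,
                      integral_exp_Iic]
      _ = K * (C0 * Real.exp ((2*A-2)*r - r^2/(8*c*K)) * Real.exp r) := by
          rw [MeasureTheory.setIntegral_const, Real.volume_real_Ioc_of_le htT.le, smul_eq_mul,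
            hK_def]
      _ = K*C0*Real.exp ((2*A-1)*r - r^2/(8*c*K)) := by
          rw [mul_assoc C0, ← Real.exp_add,
            show (2*A-2)*r - r^2/(8*c*K) + r = (2*A-1)*r - r^2/(8*c*K) from by ring]
          ring
end

section
/- Let μ, σ, ρ > 0, let 0 ≤ t < T, and let f : [0,T] → ℝ be continuous with f(s) ≥ 0 for all s ∈ [0,T]. Then there exists a constant C > 0 such that for all r > 2, ∫_t^T ∫_{−∞}^r e^{−ρs + x} φ(s−t, x, r) f(s) dx ds ≤ C · r · exp( (μ̃/σ̃) r + r − (r² − 1)/(2σ̃²(T−t)) ). -/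
set_option maxHeartbeats 1000000

open MeasureTheory Set Filter Real intervalIntegral
open scoped Topology

lemma aux_exp {b : ℝ} (c : ℝ) (hb : 0 < b) :
    IntegrableOn (fun x => Real.exp (b*(x - c))) (Set.Iic c) ∧
    (∫ x in Set.Iic c, Real.exp (b*(x - c))) ≤ 1/b := by
  have hcont : Continuous fun x : ℝ => Real.exp (b*(x - c)) :=
    Real.continuous_exp.comp (continuous_const.mul (continuous_id.sub continuous_const))
  have key : ∀ y : ℝ, (∫ x in y..c, Real.exp (b*(x - c))) = (1 - Real.exp (b*(y - c)))/b := by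
    intro y
    have hF : ∀ x : ℝ, HasDerivAt (fun x => Real.exp (b*(x - c))/b) (Real.exp (b*(x - c))) x := by
      intro x
      have h1 : HasDerivAt (fun x : ℝ => b*(x - c)) b x := by
        simpa using ((hasDerivAt_id x).sub_const c).const_mul b
      have h2 := (h1.exp).div_const b
      exact h2.congr_deriv (by field_simp)
    rw [intervalIntegral.integral_eq_sub_of_hasDerivAt (fun x _ => hF x)
      (hcont.intervalIntegrable _ _)]
    simp
    field_simp
  have hle : ∀ y : ℝ, (∫ x in y..c, Real.exp (b*(x - c))) ≤ 1/b := by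
    intro y
    rw [key y]
    gcongr
    · linarith [Real.exp_pos (b*(y - c))]
  have hInt : IntegrableOn (fun x => Real.exp (b*(x - c))) (Set.Iic c) := by
    refine integrableOn_Iic_of_intervalIntegral_norm_bounded (1/b) c
      (fun y : ℝ => (hcont.integrableOn_Ioc)) tendsto_id (Filter.Eventually.of_forall fun y => ?_)
    simpa [Real.abs_exp] using hle y
  refine ⟨hInt, ?_⟩
  exact le_of_tendsto (intervalIntegral_tendsto_integral_Iic c hInt tendsto_id)
    (Filter.Eventually.of_forall hle)

lemma aux_gauss {b : ℝ} (c : ℝ) (hb : 0 < b) :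
    IntegrableOn (fun x => (c - x) * Real.exp (-(b*(c - x)^2))) (Set.Iic c) ∧
    (∫ x in Set.Iic c, (c - x) * Real.exp (-(b*(c - x)^2))) ≤ 1/(2*b) := by
  have hcont : Continuous fun x : ℝ => (c - x) * Real.exp (-(b*(c - x)^2)) := by
    continuity
  have key : ∀ y : ℝ, (∫ x in y..c, (c - x) * Real.exp (-(b*(c - x)^2)))
      = (1 - Real.exp (-(b*(c - y)^2)))/(2*b) := by
    intro y
    have hF : ∀ x : ℝ, HasDerivAt (fun x => Real.exp (-(b*(c - x)^2))/(2*b))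
        ((c - x) * Real.exp (-(b*(c - x)^2))) x := by
      intro x
      have h1 : HasDerivAt (fun x : ℝ => c - x) (-1) x := (hasDerivAt_id x).const_sub c
      have h2 := (((h1.pow 2).const_mul b).neg.exp).div_const (2*b)
      exact h2.congr_deriv (by simp only [Pi.neg_apply, Pi.pow_apply]; field_simp; ring)
    rw [intervalIntegral.integral_eq_sub_of_hasDerivAt (fun x _ => hF x)
      (hcont.intervalIntegrable _ _)]
    simp
    field_simp
  have hle : ∀ y : ℝ, (∫ x in y..c, (c - x) * Real.exp (-(b*(c - x)^2))) ≤ 1/(2*b) := by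
    intro y
    rw [key y]
    gcongr
    · linarith [Real.exp_pos (-(b*(c - y)^2))]
  have hInt : IntegrableOn (fun x => (c - x) * Real.exp (-(b*(c - x)^2))) (Set.Iic c) := by
    refine integrableOn_Iic_of_intervalIntegral_norm_bounded (1/(2*b)) c
      (fun y : ℝ => (hcont.integrableOn_Ioc)) tendsto_id ?_
    filter_upwards [Iic_mem_atBot c] with y hy
    have heq : (∫ x in y..c, ‖(c - x) * Real.exp (-(b*(c - x)^2))‖)
        = ∫ x in y..c, (c - x) * Real.exp (-(b*(c - x)^2)) := by
      apply intervalIntegral.integral_congr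
      intro x hx
      rw [Set.uIcc_of_le hy] at hx
      exact norm_of_nonneg (mul_nonneg (by linarith [hx.2]) (Real.exp_pos _).le)
    simp only [id]
    rw [heq]
    exact hle y
  refine ⟨hInt, ?_⟩
  exact le_of_tendsto (intervalIntegral_tendsto_integral_Iic c hInt tendsto_id)
    (Filter.Eventually.of_forall hle)

/-- The Gaussian-tail bound: there is a constant `C > 0` such that for all
`r > 2`, `∫_t^T ∫_{−∞}^r e^{−ρs+x} φ(s−t,x,r) f(s) dx ds
  ≤ C r exp((μ̃/σ̃) r + r − (r²−1)/(2σ̃²(T−t)))`. -/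
theorem stmt_9 (μ σ ρ t T : ℝ) (hμ : 0 < μ) (hσ : 0 < σ) (hρ : 0 < ρ)
    (ht : 0 ≤ t) (htT : t < T) (f : ℝ → ℝ)
    (hf : ContinuousOn f (Set.Icc 0 T))
    (hfnonneg : ∀ s ∈ Set.Icc (0:ℝ) T, 0 ≤ f s)
    (μt σt : ℝ) (hμt : μt = μ/(2*σ) - σ*ρ/μ) (hσt : σt = -(μ/σ)) :
    ∃ C : ℝ, 0 < C ∧ ∀ r : ℝ, 2 < r →
      (∫ s in t..T, ∫ x in Set.Iio r, Real.exp (-ρ*s + x) * phi μ σ ρ (s-t) x r * f s)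
        ≤ C * r * Real.exp ((μt/σt)*r + r - (r^2 - 1)/(2*σt^2*(T-t))) := by
  have hμσ : 0 < μ/σ := div_pos hμ hσ
  have hσt_ne : σt ≠ 0 := by rw [hσt]; exact neg_ne_zero.2 (ne_of_gt hμσ)
  have hA : 0 < σt^2 := lt_of_le_of_ne (sq_nonneg σt) (Ne.symm (pow_ne_zero 2 hσt_ne))
  set L := T - t with hLdef
  have hL : 0 < L := sub_pos.2 htT
  set A := σt^2 with hAdef
  set SP := Real.sqrt (2*A*Real.pi) with hSPdef
  have hSP : 0 < SP := Real.sqrt_pos.2 (mul_pos (mul_pos (by norm_num) hA) Real.pi_pos)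
  obtain ⟨M, hM⟩ := (isCompact_Icc (a := (0:ℝ)) (b := T)).exists_bound_of_continuousOn hf
  have hM0 : 0 ≤ M := le_trans (norm_nonneg (f 0)) (hM 0 ⟨le_refl 0, by linarith⟩)
  set c1 := 1 + μt/σt with hc1def
  set C0 := 12*M*Real.sqrt L*Real.exp (c1^2*A*L)/SP with hC0def
  have hC0 : 0 ≤ C0 :=
    div_nonneg (mul_nonneg (mul_nonneg (by linarith) (Real.sqrt_nonneg _)) (Real.exp_pos _).le)
      hSP.le
  refine ⟨C0 + 1, by linarith, fun r hr => ?_⟩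
  have hr0 : 0 < r := by linarith
  have hr21 : 1 ≤ r^2 := by rw [sq]; nlinarith [hr]
  set R := c1*r + c1^2*A*L - (r^2-1)/(2*A*L) with hRdef
  set KK := 6*M*Real.exp R/SP with hKKdef
  have hKK0 : 0 ≤ KK :=
    div_nonneg (mul_nonneg (by linarith) (Real.exp_pos _).le) hSP.le
  -- nonnegativity of the integrand
  have hFnn : ∀ s ∈ Set.Ioc t T, ∀ x ∈ Set.Iio r,
      0 ≤ Real.exp (-ρ*s + x) * phi μ σ ρ (s-t) x r * f s := by
    intro s hs x hx
    have hsIcc : s ∈ Set.Icc (0:ℝ) T := ⟨le_trans ht hs.1.le, hs.2⟩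
    have hphi : 0 ≤ phi μ σ ρ (s-t) x r := by
      unfold phi
      apply mul_nonneg _ (Real.exp_pos _).le
      apply div_nonneg (by simp at hx; linarith)
      exact mul_nonneg (sq_nonneg _) (Real.sqrt_nonneg _)
    exact mul_nonneg (mul_nonneg (Real.exp_pos _).le hphi) (hfnonneg s hsIcc)
  -- the key inner bound
  have key_inner : ∀ s ∈ Set.Ioc t T,
      (∫ x in Set.Iio r, Real.exp (-ρ*s + x) * phi μ σ ρ (s-t) x r * f s)
        ≤ KK / Real.sqrt (s - t) := by
    intro s hs
    obtain ⟨hst, hsT⟩ := hs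
    have hu : 0 < s - t := sub_pos.2 hst
    have huL : s - t ≤ L := by rw [hLdef]; linarith
    have hs0 : 0 ≤ s := le_trans ht hst.le
    have hsIcc : s ∈ Set.Icc (0:ℝ) T := ⟨hs0, hsT⟩
    set u := s - t with hudef
    have hAu : 0 < A * u := mul_pos hA hu
    have h4Au : 0 < 4*A*u := by linarith [mul_pos hA hu]
    set b1 := r/(A*u) with hb1def
    set b2 := 1/(4*A*u) with hb2def
    have hb1 : 0 < b1 := div_pos hr0 hAu
    have hb2 : 0 < b2 := by rw [hb2def]; exact one_div_pos.2 h4Au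
    have hsqu : 0 < Real.sqrt u := Real.sqrt_pos.2 hu
    set D := A * SP * (u * Real.sqrt u) with hDdef
    have hD : 0 < D := by rw [hDdef]; exact mul_pos (mul_pos hA hSP) (mul_pos hu hsqu)
    set Q := M * Real.exp R / D with hQdef
    have hQ0 : 0 ≤ Q := div_nonneg (mul_nonneg hM0 (Real.exp_pos _).le) hD.le
    have hsq3 : Real.sqrt (2*A*Real.pi*u^3) = SP * (u * Real.sqrt u) := by
      rw [Real.sqrt_mul (mul_nonneg (by linarith) Real.pi_pos.le) (u^3), hSPdef]
      congr 1
      rw [show u^3 = u^2*u by ring, Real.sqrt_mul (sq_nonneg u), Real.sqrt_sq hu.le]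
    set g := fun x : ℝ =>
      Q * (2*r*Real.exp (b1*(x - r)) + 2*((r - x)*Real.exp (-(b2*(r - x)^2)))) with hgdef
    have hgint : IntegrableOn g (Set.Iio r) := by
      have h := (((aux_exp r hb1).1.const_mul (2*r)).add
        ((aux_gauss r hb2).1.const_mul 2)).const_mul Q
      exact MeasureTheory.IntegrableOn.mono_set h Set.Iio_subset_Iic_self
    -- pointwise bound
    have hfM : f s ≤ M := (le_abs_self _).trans (by simpa using hM s hsIcc)
    have hpt : ∀ x ∈ Set.Iio r,
        Real.exp (-ρ*s + x) * phi μ σ ρ u x r * f s ≤ g x := by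
      intro x hx
      have hx' : x < r := hx
      have hy : 0 < r - x := sub_pos.2 hx'
      have hphi : phi μ σ ρ u x r
          = (2*(2*r - x))/(A * Real.sqrt (2*A*Real.pi*u^3))
            * Real.exp (μt/σt*x - 1/2*μt^2*u - (2*r - x)^2/(2*A*u)) := by
        unfold phi
        rw [hAdef, hμt, hσt]
      have hcoeff : 0 ≤ (2*(2*r - x))/(A * Real.sqrt (2*A*Real.pi*u^3)) :=
        div_nonneg (by linarith) (mul_nonneg hA.le (Real.sqrt_nonneg _))
      have hexp_le : -ρ*s + x + (μt/σt*x - 1/2*μt^2*u - (2*r - x)^2/(2*A*u))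
          ≤ R + (-(b1*(r - x))) + (-(b2*(r - x)^2)) := by
        have hsplit0 : (2*r - x)^2/(2*A*u)
            = r^2/(2*A*u) + b1*(r-x) + 2*(b2*(r-x)^2) := by
          rw [hb1def, hb2def]; field_simp; ring
        have h300 : 0 ≤ c1^2*(A*u) + b2*(r-x)^2 + c1*(r-x) := by
          have hkey : c1^2*(A*u) + b2*(r-x)^2 + c1*(r-x)
              = (2*c1*(A*u) + (r-x))^2 * b2 := by
            rw [hb2def]; field_simp; ring
          rw [hkey]
          exact mul_nonneg (sq_nonneg _) hb2.le
        have hρs : -(ρ*s) ≤ 0 := neg_nonpos.2 (mul_nonneg hρ.le hs0)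
        have hmu : 0 ≤ 1/2*μt^2*u := by positivity
        have hcx : x + μt/σt*x = c1*r - c1*(r-x) := by rw [hc1def]; ring
        have hAuL : 2*A*u ≤ 2*A*L := by
          linarith [mul_le_mul_of_nonneg_left huL hA.le]
        have h2Au : (0:ℝ) < 2*A*u := by linarith [mul_pos hA hu]
        have h4' : c1^2*A*u ≤ c1^2*A*L := by
          linarith [mul_le_mul_of_nonneg_left huL (mul_nonneg (sq_nonneg c1) hA.le)]
        have h2a : (r^2-1)/(2*A*L) ≤ (r^2-1)/(2*A*u) :=
          div_le_div_of_nonneg_left (by linarith only [hr21]) h2Au hAuL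
        have h2b : (r^2-1)/(2*A*u) ≤ r^2/(2*A*u) :=
          (div_le_div_iff_of_pos_right h2Au).2 (by linarith only [])
        clear_value u A L c1 b1 b2 R
        linarith only [hsplit0, h2a, h2b, h300, h4', hρs, hmu, hcx, hRdef]
      have hα : Real.exp (b1*(x - r)) = Real.exp (-(b1*(r - x))) := by
        congr 1; ring
      have hα1 : Real.exp (-(b1*(r-x))) ≤ 1 :=
        Real.exp_le_one_iff.2 (neg_nonpos.2 (mul_pos hb1 hy).le)
      have hβ1 : Real.exp (-(b2*(r-x)^2)) ≤ 1 :=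
        Real.exp_le_one_iff.2 (neg_nonpos.2 (mul_nonneg hb2.le (sq_nonneg _)))
      calc Real.exp (-ρ*s + x) * phi μ σ ρ u x r * f s
          = (2*(2*r - x))/(A * Real.sqrt (2*A*Real.pi*u^3))
            * Real.exp (-ρ*s + x + (μt/σt*x - 1/2*μt^2*u - (2*r - x)^2/(2*A*u))) * f s := by
            rw [hphi, Real.exp_add (-ρ*s + x)]; ring
        _ ≤ (2*(2*r - x))/(A * Real.sqrt (2*A*Real.pi*u^3))
            * Real.exp (-ρ*s + x + (μt/σt*x - 1/2*μt^2*u - (2*r - x)^2/(2*A*u))) * M := by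
            exact mul_le_mul_of_nonneg_left hfM (mul_nonneg hcoeff (Real.exp_pos _).le)
        _ ≤ (2*(2*r - x))/(A * Real.sqrt (2*A*Real.pi*u^3))
            * Real.exp (R + (-(b1*(r - x))) + (-(b2*(r - x)^2))) * M := by
            exact mul_le_mul_of_nonneg_right
              (mul_le_mul_of_nonneg_left (Real.exp_le_exp.2 hexp_le) hcoeff) hM0
        _ = (M * Real.exp R / D)
            * ((2*r)*(Real.exp (-(b1*(r-x))) * Real.exp (-(b2*(r-x)^2)))
              + (2*(r-x))*(Real.exp (-(b1*(r-x))) * Real.exp (-(b2*(r-x)^2)))) := by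
            rw [hsq3, Real.exp_add, Real.exp_add, hDdef]
            field_simp
            ring
        _ ≤ (M * Real.exp R / D)
            * (2*r*Real.exp (-(b1*(r - x))) + 2*((r - x)*Real.exp (-(b2*(r - x)^2)))) := by
            apply mul_le_mul_of_nonneg_left _ (div_nonneg (mul_nonneg hM0 (Real.exp_pos _).le) hD.le)
            apply add_le_add
            · have : Real.exp (-(b1*(r-x))) * Real.exp (-(b2*(r-x)^2))
                  ≤ Real.exp (-(b1*(r-x))) :=
                mul_le_of_le_one_right (Real.exp_pos _).le hβ1
              calc (2*r)*(Real.exp (-(b1*(r-x))) * Real.exp (-(b2*(r-x)^2)))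
                  ≤ (2*r)*Real.exp (-(b1*(r-x))) :=
                    mul_le_mul_of_nonneg_left this (by linarith)
                _ = 2*r*Real.exp (-(b1*(r - x))) := by ring
            · have : Real.exp (-(b1*(r-x))) * Real.exp (-(b2*(r-x)^2))
                  ≤ Real.exp (-(b2*(r-x)^2)) :=
                mul_le_of_le_one_left (Real.exp_pos _).le hα1
              calc (2*(r-x))*(Real.exp (-(b1*(r-x))) * Real.exp (-(b2*(r-x)^2)))
                  ≤ (2*(r-x))*Real.exp (-(b2*(r-x)^2)) :=
                    mul_le_mul_of_nonneg_left this (by linarith)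
                _ = 2*((r-x)*Real.exp (-(b2*(r - x)^2))) := by ring
        _ = g x := by simp only [hgdef]; rw [hQdef, hα]
    have step1 : (∫ x in Set.Iio r, Real.exp (-ρ*s + x) * phi μ σ ρ u x r * f s)
        ≤ ∫ x in Set.Iio r, g x := by
      apply integral_mono_of_nonneg
        (ae_restrict_of_forall_mem measurableSet_Iio (hFnn s ⟨hst, hsT⟩)) hgint
        (ae_restrict_of_forall_mem measurableSet_Iio hpt)
    have step2 : (∫ x in Set.Iio r, g x) ≤ Q * (2*r*(1/b1) + 2*(1/(2*b2))) := by
      rw [setIntegral_congr_set Iio_ae_eq_Iic]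
      simp only [hgdef]
      rw [MeasureTheory.integral_const_mul _ _,
        integral_add ((aux_exp r hb1).1.const_mul (2*r)) ((aux_gauss r hb2).1.const_mul 2),
        MeasureTheory.integral_const_mul _ _, MeasureTheory.integral_const_mul _ _]
      gcongr
      · exact (aux_exp r hb1).2
      · exact (aux_gauss r hb2).2
    have hval : Q * (2*r*(1/b1) + 2*(1/(2*b2))) = KK / Real.sqrt u := by
      rw [hQdef, hb1def, hb2def, hKKdef, hDdef]
      field_simp
      ring
    calc (∫ x in Set.Iio r, Real.exp (-ρ*s + x) * phi μ σ ρ u x r * f s)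
        ≤ Q * (2*r*(1/b1) + 2*(1/(2*b2))) := le_trans step1 step2
      _ = KK / Real.sqrt u := hval
  -- the outer integral
  have hLHS : (∫ s in t..T, ∫ x in Set.Iio r, Real.exp (-ρ*s + x) * phi μ σ ρ (s-t) x r * f s)
      = ∫ s in Set.Ioc t T, ∫ x in Set.Iio r, Real.exp (-ρ*s + x) * phi μ σ ρ (s-t) x r * f s :=
    intervalIntegral.integral_of_le htT.le
  have hGint : IntegrableOn (fun s : ℝ => KK * (s - t) ^ (-(1/2) : ℝ)) (Set.Ioc t T) := by
    have h1 : IntervalIntegrable (fun x : ℝ => x ^ (-(1/2) : ℝ)) volume 0 L :=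
      intervalIntegral.intervalIntegrable_rpow' (by norm_num)
    have h2 := (h1.comp_sub_right t).const_mul KK
    rw [show (0:ℝ) + t = t by ring, show L + t = T by rw [hLdef]; ring] at h2
    rwa [intervalIntegrable_iff_integrableOn_Ioc_of_le htT.le] at h2
  have hGval : (∫ s in Set.Ioc t T, KK * (s - t) ^ (-(1/2) : ℝ)) = KK * (2*Real.sqrt L) := by
    rw [← intervalIntegral.integral_of_le htT.le, intervalIntegral.integral_const_mul]
    congr 1
    rw [intervalIntegral.integral_comp_sub_right (fun x : ℝ => x ^ (-(1/2) : ℝ)) t]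
    rw [show t - t = (0:ℝ) by ring]
    rw [integral_rpow (Or.inl (by norm_num))]
    rw [show -(1/2) + 1 = (1/2 : ℝ) by norm_num, Real.zero_rpow (by norm_num),
      Real.sqrt_eq_rpow]
    rw [hLdef]
    ring
  have hmono : (∫ s in Set.Ioc t T, ∫ x in Set.Iio r,
        Real.exp (-ρ*s + x) * phi μ σ ρ (s-t) x r * f s)
      ≤ ∫ s in Set.Ioc t T, KK * (s - t) ^ (-(1/2) : ℝ) := by
    apply integral_mono_of_nonneg
    · apply ae_restrict_of_forall_mem measurableSet_Ioc
      intro s hs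
      exact setIntegral_nonneg measurableSet_Iio (hFnn s hs)
    · exact hGint
    · apply ae_restrict_of_forall_mem measurableSet_Ioc
      intro s hs
      have hu : 0 < s - t := sub_pos.2 hs.1
      have : KK / Real.sqrt (s-t) = KK * (s - t) ^ (-(1/2) : ℝ) := by
        rw [Real.rpow_neg hu.le, ← Real.sqrt_eq_rpow, div_eq_mul_inv]
      exact (key_inner s hs).trans_eq this
  have hfinal : KK * (2*Real.sqrt L)
      = C0 * Real.exp ((μt/σt)*r + r - (r^2 - 1)/(2*A*L)) := by
    rw [hKKdef, hC0def, hRdef,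
      show c1*r + c1^2*A*L - (r^2-1)/(2*A*L)
        = c1^2*A*L + ((μt/σt)*r + r - (r^2 - 1)/(2*A*L)) by rw [hc1def]; ring,
      Real.exp_add]
    ring
  have hE : 0 < Real.exp ((μt/σt)*r + r - (r^2 - 1)/(2*A*L)) := Real.exp_pos _
  calc (∫ s in t..T, ∫ x in Set.Iio r, Real.exp (-ρ*s + x) * phi μ σ ρ (s-t) x r * f s)
      ≤ KK * (2*Real.sqrt L) := by rw [hLHS]; exact le_trans hmono (le_of_eq hGval)
    _ = C0 * Real.exp ((μt/σt)*r + r - (r^2 - 1)/(2*A*L)) := hfinal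
    _ ≤ (C0 + 1) * r * Real.exp ((μt/σt)*r + r - (r^2 - 1)/(2*A*L)) := by
        apply mul_le_mul_of_nonneg_right _ hE.le
        have h1r : (C0+1)*1 ≤ (C0+1)*r := by
          apply mul_le_mul_of_nonneg_left (by linarith only [hr]) (by linarith only [hC0])
        linarith only [h1r, hC0]
end

section
/- Let ρ > 0 and 0 ≤ t < T, and let L₁, L₂ : [t,T] → ℝ be nondecreasing continuous functions with L₁(t) = L₂(t) = 0. Then | ∫_{(t,T]} e^{−ρ(s−t)} dL₁(s) − ∫_{(t,T]} e^{−ρ(s−t)} dL₂(s) | ≤ (1 + ρ(T−t)) · sup_{s∈[t,T]} |L₁(s) − L₂(s)|, where the integrals are Lebesgue–Stieltjes integrals with respect to the measures induced by L₁ and L₂. -/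
open MeasureTheory

private lemma stmt10_aux_int (ρ t T : ℝ) (hρ : 0 < ρ) (L : StieltjesFunction ℝ) :
    IntegrableOn (fun u => ρ * Real.exp (-ρ*(u-t)) * (L u - L t)) (Set.Ioc t T) volume := by
  have hLmono := L.mono
  have hmeas2 : Measurable fun u => ρ * Real.exp (-ρ*(u-t)) * (L u - L t) := by
    have := hLmono.measurable
    fun_prop
  apply Measure.integrableOn_of_bounded (M := ρ * (L T - L t)) (by simp)
    hmeas2.aestronglyMeasurable
  refine (ae_restrict_iff' measurableSet_Ioc).2 (ae_of_all _ ?_)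
  intro u hu
  have hfpos : (0:ℝ) < Real.exp (-ρ*(u-t)) := Real.exp_pos _
  have h1 : Real.exp (-ρ*(u-t)) ≤ 1 := Real.exp_le_one_iff.2 (by nlinarith [hu.1.le])
  have h2 : (0:ℝ) ≤ L u - L t := sub_nonneg.2 (hLmono hu.1.le)
  have h3 : L u - L t ≤ L T - L t := by have := hLmono hu.2; linarith
  rw [Real.norm_eq_abs, abs_of_nonneg (by positivity)]
  calc ρ * Real.exp (-ρ*(u-t)) * (L u - L t) ≤ ρ * 1 * (L T - L t) := by
        apply mul_le_mul (by nlinarith) h3 h2 (by positivity)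
    _ = ρ * (L T - L t) := by ring

private lemma stmt10_key (ρ t T : ℝ) (hρ : 0 < ρ) (htT : t < T) (L : StieltjesFunction ℝ) :
    ∫ s in Set.Ioc t T, Real.exp (-ρ*(s-t)) ∂L.measure
      = Real.exp (-ρ*(T-t)) * (L T - L t)
        + ∫ u in Set.Ioc t T, ρ * Real.exp (-ρ*(u-t)) * (L u - L t) := by
  set μ := L.measure
  set f : ℝ → ℝ := fun s => Real.exp (-ρ*(s-t)) with hf
  have hfpos : ∀ s, 0 < f s := fun s => Real.exp_pos _
  -- FTC
  have ftc : ∀ s, s ≤ T → f s = f T + ∫ u in Set.Ioc s T, ρ * f u := by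
    intro s hsT
    have hderiv : ∀ u ∈ Set.uIcc s T, HasDerivAt (fun u => -f u) (ρ * f u) u := by
      intro u _
      have h1 : HasDerivAt (fun u : ℝ => -ρ*(u-t)) (-ρ) u := by
        simpa using ((hasDerivAt_id u).sub_const t).const_mul (-ρ)
      have h2 := ((Real.hasDerivAt_exp (-ρ*(u-t))).comp u h1).neg
      refine h2.congr_deriv ?_; simp only [hf]; ring
    have hcont : IntervalIntegrable (fun u => ρ * f u) volume s T :=
      (Continuous.intervalIntegrable (by fun_prop)) s T
    have h3 := intervalIntegral.integral_eq_sub_of_hasDerivAt hderiv hcont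
    rw [intervalIntegral.integral_of_le hsT] at h3
    rw [h3]; ring
  have hLmono := L.mono
  have hInt : IntegrableOn (fun u => ρ * f u * (L u - L t)) (Set.Ioc t T) volume :=
    stmt10_aux_int ρ t T hρ L
  have hnn2 : ∀ u ∈ Set.Ioc t T, 0 ≤ ρ * f u * (L u - L t) := by
    intro u hu
    have h2 : (0:ℝ) ≤ L u - L t := sub_nonneg.2 (hLmono hu.1.le)
    positivity
  -- Step 1 : LHS as lintegral
  have lhs_eq : ∫ s in Set.Ioc t T, f s ∂μ
      = (∫⁻ s in Set.Ioc t T, ENNReal.ofReal (f s) ∂μ).toReal := by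
    apply integral_eq_lintegral_of_nonneg_ae (ae_of_all _ fun s => (hfpos s).le)
    exact ((Real.continuous_exp.comp (by fun_prop)).aestronglyMeasurable)
  -- Step 2 : pointwise split under lintegral
  have split : ∫⁻ s in Set.Ioc t T, ENNReal.ofReal (f s) ∂μ
      = ENNReal.ofReal (f T) * μ (Set.Ioc t T)
        + ∫⁻ s in Set.Ioc t T, (∫⁻ u in Set.Ioc s T, ENNReal.ofReal (ρ * f u)) ∂μ := by
    have e1 : ∫⁻ s in Set.Ioc t T, ENNReal.ofReal (f s) ∂μ
        = ∫⁻ s in Set.Ioc t T,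
            (ENNReal.ofReal (f T) + ∫⁻ u in Set.Ioc s T, ENNReal.ofReal (ρ * f u)) ∂μ := by
      apply setLIntegral_congr_fun measurableSet_Ioc
      intro s hs
      have hIeq : ENNReal.ofReal (∫ u in Set.Ioc s T, ρ * f u)
          = ∫⁻ u in Set.Ioc s T, ENNReal.ofReal (ρ * f u) := by
        apply ofReal_integral_eq_lintegral_ofReal
        · exact (Continuous.integrableOn_Ioc (by fun_prop))
        · exact ae_of_all _ fun u => by positivity
      beta_reduce
      rw [ftc s hs.2, ENNReal.ofReal_add (hfpos T).le
        (setIntegral_nonneg measurableSet_Ioc fun u _ => by positivity), hIeq]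
    rw [e1, lintegral_add_left measurable_const, setLIntegral_const]
  -- Step 3 : Fubini swap for the double integral
  set G : ℝ → ℝ → ENNReal := fun s u =>
    {p : ℝ × ℝ | p.1 ≤ p.2}.indicator (fun p => ENNReal.ofReal (ρ * f p.2)) (s, u) with hG
  have claim1 : ∀ s ∈ Set.Ioc t T,
      (∫⁻ u in Set.Ioc s T, ENNReal.ofReal (ρ * f u))
        = ∫⁻ u in Set.Ioc t T, G s u := by
    intro s hs
    have h0 : ∫⁻ u in Set.Ioc t T, G s u
        = ∫⁻ u in Set.Ioc t T ∩ Set.Ici s, ENNReal.ofReal (ρ * f u) := by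
      rw [← lintegral_indicator (measurableSet_Ioc.inter measurableSet_Ici)]
      rw [← lintegral_indicator measurableSet_Ioc]
      congr 1
      ext u
      simp only [Set.indicator_apply, hG, Set.mem_inter_iff, Set.mem_setOf_eq, Set.mem_Ici]
      by_cases h1 : u ∈ Set.Ioc t T <;> by_cases h2 : s ≤ u <;> simp [h1, h2]
    rw [h0]
    have hset : Set.Ioc t T ∩ Set.Ici s = Set.Icc s T := by
      ext u
      simp only [Set.mem_inter_iff, Set.mem_Ioc, Set.mem_Ici, Set.mem_Icc]
      constructor
      · rintro ⟨⟨_, h2⟩, h3⟩; exact ⟨h3, h2⟩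
      · rintro ⟨h1, h2⟩; exact ⟨⟨lt_of_lt_of_le hs.1 h1, h2⟩, h1⟩
    rw [hset]
    exact (setLIntegral_congr Ioc_ae_eq_Icc.symm).symm
  have hGmeas : AEMeasurable (Function.uncurry G)
      ((μ.restrict (Set.Ioc t T)).prod (volume.restrict (Set.Ioc t T))) := by
    have hm : Measurable (fun p : ℝ × ℝ => ENNReal.ofReal (ρ * f p.2)) := by fun_prop
    exact (hm.indicator (measurableSet_le measurable_fst measurable_snd)).aemeasurable
  have claim2 : ∀ u ∈ Set.Ioc t T,
      (∫⁻ s in Set.Ioc t T, G s u ∂μ) = ENNReal.ofReal (ρ * f u) * μ (Set.Ioc t u) := by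
    intro u hu
    have h0 : (fun s => G s u) = (Set.Iic u).indicator (fun _ => ENNReal.ofReal (ρ * f u)) := by
      ext s
      simp only [hG, Set.indicator_apply, Set.mem_setOf_eq, Set.mem_Iic]
    rw [h0, lintegral_indicator_const measurableSet_Iic,
      Measure.restrict_apply measurableSet_Iic]
    have hset2 : Set.Iic u ∩ Set.Ioc t T = Set.Ioc t u := by
      ext s
      simp only [Set.mem_inter_iff, Set.mem_Iic, Set.mem_Ioc]
      exact ⟨fun ⟨h1, h2, _⟩ => ⟨h2, h1⟩, fun ⟨h1, h2⟩ => ⟨h2, h1, h2.trans hu.2⟩⟩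
    rw [hset2]
  have swap : ∫⁻ s in Set.Ioc t T, (∫⁻ u in Set.Ioc s T, ENNReal.ofReal (ρ * f u)) ∂μ
      = ∫⁻ u in Set.Ioc t T, ENNReal.ofReal (ρ * f u * (L u - L t)) := by
    calc ∫⁻ s in Set.Ioc t T, (∫⁻ u in Set.Ioc s T, ENNReal.ofReal (ρ * f u)) ∂μ
        = ∫⁻ s in Set.Ioc t T, (∫⁻ u in Set.Ioc t T, G s u) ∂μ :=
          setLIntegral_congr_fun measurableSet_Ioc claim1
      _ = ∫⁻ u in Set.Ioc t T, (∫⁻ s in Set.Ioc t T, G s u ∂μ) :=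
          lintegral_lintegral_swap hGmeas
      _ = ∫⁻ u in Set.Ioc t T, ENNReal.ofReal (ρ * f u) * μ (Set.Ioc t u) :=
          setLIntegral_congr_fun measurableSet_Ioc claim2
      _ = ∫⁻ u in Set.Ioc t T, ENNReal.ofReal (ρ * f u * (L u - L t)) := by
          refine setLIntegral_congr_fun measurableSet_Ioc (fun u hu => ?_)
          rw [L.measure_Ioc, ← ENNReal.ofReal_mul (by positivity)]
  have final_l : ∫⁻ s in Set.Ioc t T, ENNReal.ofReal (f s) ∂μ
      = ENNReal.ofReal (f T * (L T - L t))
        + ENNReal.ofReal (∫ u in Set.Ioc t T, ρ * f u * (L u - L t)) := by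
    rw [split, swap, L.measure_Ioc, ← ENNReal.ofReal_mul (hfpos T).le,
      ofReal_integral_eq_lintegral_ofReal hInt
        ((ae_restrict_iff' measurableSet_Ioc).2 (ae_of_all _ hnn2))]
  have hLTt : (0:ℝ) ≤ L T - L t := sub_nonneg.2 (hLmono htT.le)
  rw [lhs_eq, final_l, ENNReal.toReal_add ENNReal.ofReal_ne_top ENNReal.ofReal_ne_top,
    ENNReal.toReal_ofReal (by positivity),
    ENNReal.toReal_ofReal (setIntegral_nonneg measurableSet_Ioc hnn2)]

/-- The discounted Stieltjes costs of two nondecreasing continuous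
"local time" processes starting at `0` differ by at most `(1 + ρ(T−t))` times their uniform
distance on `[t,T]`. -/
theorem stmt_10 (ρ t T : ℝ) (hρ : 0 < ρ) (ht : 0 ≤ t) (htT : t < T)
    (L₁ L₂ : StieltjesFunction ℝ)
    (hL₁cont : ContinuousOn L₁ (Set.Icc t T))
    (hL₂cont : ContinuousOn L₂ (Set.Icc t T))
    (hL₁t : L₁ t = 0) (hL₂t : L₂ t = 0) :
    |(∫ s in Set.Ioc t T, Real.exp (-ρ*(s-t)) ∂L₁.measure)
        - ∫ s in Set.Ioc t T, Real.exp (-ρ*(s-t)) ∂L₂.measure|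
      ≤ (1 + ρ*(T-t)) * sSup ((fun s => |L₁ s - L₂ s|) '' Set.Icc t T) := by
  set M := sSup ((fun s => |L₁ s - L₂ s|) '' Set.Icc t T) with hM
  have hIccC : ContinuousOn (fun s => |L₁ s - L₂ s|) (Set.Icc t T) :=
    (hL₁cont.sub hL₂cont).abs
  have hbddA : BddAbove ((fun s => |L₁ s - L₂ s|) '' Set.Icc t T) :=
    (isCompact_Icc.image_of_continuousOn hIccC).bddAbove
  have hMb : ∀ s ∈ Set.Icc t T, |L₁ s - L₂ s| ≤ M :=
    fun s hs => le_csSup hbddA ⟨s, hs, rfl⟩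
  have hM0 : (0:ℝ) ≤ M :=
    le_trans (abs_nonneg _) (hMb t ⟨le_refl t, htT.le⟩)
  rw [stmt10_key ρ t T hρ htT L₁, stmt10_key ρ t T hρ htT L₂]
  have hdiff :
      (Real.exp (-ρ*(T-t)) * (L₁ T - L₁ t)
          + ∫ u in Set.Ioc t T, ρ * Real.exp (-ρ*(u-t)) * (L₁ u - L₁ t))
        - (Real.exp (-ρ*(T-t)) * (L₂ T - L₂ t)
          + ∫ u in Set.Ioc t T, ρ * Real.exp (-ρ*(u-t)) * (L₂ u - L₂ t))
      = Real.exp (-ρ*(T-t)) * (L₁ T - L₂ T)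
          + ∫ u in Set.Ioc t T, ρ * Real.exp (-ρ*(u-t)) * (L₁ u - L₂ u) := by
    have hsub : (∫ u in Set.Ioc t T, ρ * Real.exp (-ρ*(u-t)) * (L₁ u - L₁ t))
        - (∫ u in Set.Ioc t T, ρ * Real.exp (-ρ*(u-t)) * (L₂ u - L₂ t))
        = ∫ u in Set.Ioc t T, ρ * Real.exp (-ρ*(u-t)) * (L₁ u - L₂ u) := by
      rw [← integral_sub (stmt10_aux_int ρ t T hρ L₁) (stmt10_aux_int ρ t T hρ L₂)]
      congr 1
      ext u
      rw [hL₁t, hL₂t]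
      ring
    rw [hL₁t, hL₂t] at hsub ⊢
    rw [sub_zero, sub_zero, mul_sub]
    linarith [hsub]
  rw [hdiff]
  have hfT1 : Real.exp (-ρ*(T-t)) ≤ 1 := Real.exp_le_one_iff.2 (by nlinarith)
  have hbound1 : |Real.exp (-ρ*(T-t)) * (L₁ T - L₂ T)| ≤ M := by
    rw [abs_mul, abs_of_nonneg (Real.exp_pos _).le]
    calc Real.exp (-ρ*(T-t)) * |L₁ T - L₂ T| ≤ 1 * M :=
          mul_le_mul hfT1 (hMb T ⟨htT.le, le_refl T⟩) (abs_nonneg _) zero_le_one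
      _ = M := one_mul M
  have hbound2 : |∫ u in Set.Ioc t T, ρ * Real.exp (-ρ*(u-t)) * (L₁ u - L₂ u)|
      ≤ ρ * M * (T - t) := by
    have h := MeasureTheory.norm_setIntegral_le_of_norm_le_const (μ := volume)
      (f := fun u => ρ * Real.exp (-ρ*(u-t)) * (L₁ u - L₂ u)) (C := ρ * M) (s := Set.Ioc t T)
      measure_Ioc_lt_top ?_
    · rw [Real.norm_eq_abs] at h
      rw [measureReal_def, Real.volume_Ioc, ENNReal.toReal_ofReal (by linarith)] at h
      linarith
    · intro u hu
      have hfpos : (0:ℝ) < Real.exp (-ρ*(u-t)) := Real.exp_pos _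
      have h1 : Real.exp (-ρ*(u-t)) ≤ 1 := Real.exp_le_one_iff.2 (by nlinarith [hu.1.le])
      rw [Real.norm_eq_abs, abs_mul, abs_of_nonneg (by positivity : (0:ℝ) ≤ ρ * Real.exp (-ρ*(u-t)))]
      calc ρ * Real.exp (-ρ*(u-t)) * |L₁ u - L₂ u| ≤ ρ * 1 * M := by
            apply mul_le_mul (by nlinarith) (hMb u ⟨hu.1.le, hu.2⟩) (abs_nonneg _) (by positivity)
        _ = ρ * M := by ring
  calc |Real.exp (-ρ*(T-t)) * (L₁ T - L₂ T)
        + ∫ u in Set.Ioc t T, ρ * Real.exp (-ρ*(u-t)) * (L₁ u - L₂ u)|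
      ≤ |Real.exp (-ρ*(T-t)) * (L₁ T - L₂ T)|
        + |∫ u in Set.Ioc t T, ρ * Real.exp (-ρ*(u-t)) * (L₁ u - L₂ u)| := abs_add_le _ _
    _ ≤ M + ρ * M * (T - t) := add_le_add hbound1 hbound2
    _ = (1 + ρ*(T-t)) * M := by ring
end
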